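/- arXiv:1305.1865 — 5 statements merged into one kernel-verified Lean document; each statement's English description precedes it below -/
import Mathlib

section
/- For every cube Q in ℝⁿ with sides parallel to the axes, there exist 2ⁿ translated dyadic grids D_β = {2^{-k}([0,1)ⁿ + j + (-1)^k β) : k ∈ ℤ, j ∈ ℤⁿ} with β ∈ {0, 1/3}ⁿ, such that for some β there is a cube Q_β ∈ D_β with Q ⊆ Q_β and side length ℓ(Q_β) ≤ 6 ℓ(Q). -/
open MeasureTheory ENNReal NNReal Set

noncomputable section

/-- Euclidean space `ℝⁿ`. -/
abbrev En (n : ℕ) := EuclideanSpace ℝ (Fin n)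

/-- The axis-parallel half-open cube with lower corner `a` and side length `h`. -/
def Cube (n : ℕ) (a : Fin n → ℝ) (h : ℝ) : Set (En n) :=
  {x | ∀ i, a i ≤ x i ∧ x i < a i + h}

/-- Conjugate exponent `p' = p/(p-1)`. -/
def rconj (p : ℝ) : ℝ := p / (p - 1)

/-- Multilinear fractional maximal operator `M_α`. -/
def MFrac (m n : ℕ) (α : ℝ) (f : Fin m → En n → ℝ) (x : En n) : ℝ≥0∞ :=
  ⨆ (a : Fin n → ℝ) (h : ℝ) (_ : 0 < h) (_ : x ∈ Cube n a h),
    ∏ i, (volume (Cube n a h)) ^ (α / (m * n : ℝ) - 1) *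
      ∫⁻ y in Cube n a h, (‖f i y‖₊ : ℝ≥0∞)

/-- Cube of the translated dyadic grid `D_β`. -/
def GridCube (n : ℕ) (β : Fin n → ℝ) (k : ℤ) (j : Fin n → ℤ) : Set (En n) :=
  Cube n (fun i => (2:ℝ) ^ (-k) * ((j i : ℝ) + (-1 : ℝ) ^ k * β i)) ((2:ℝ) ^ (-k))

/-- Multilinear fractional maximal operator restricted to the grid `D_β`. -/
def MFracGrid (m n : ℕ) (α : ℝ) (β : Fin n → ℝ) (f : Fin m → En n → ℝ) (x : En n) : ℝ≥0∞ :=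
  ⨆ (k : ℤ) (j : Fin n → ℤ) (_ : x ∈ GridCube n β k j),
    ∏ i, (volume (GridCube n β k j)) ^ (α / (m * n : ℝ) - 1) *
      ∫⁻ y in GridCube n β k j, (‖f i y‖₊ : ℝ≥0∞)

/-- The multiple weight constant `[ω]_{A_{(P,q)}}` (all `p i > 1`). -/
def Apq (m n : ℕ) (p : Fin m → ℝ) (q : ℝ) (ω : Fin m → En n → ℝ≥0∞) : ℝ≥0∞ :=
  ⨆ (a : Fin n → ℝ) (h : ℝ) (_ : 0 < h),
    ((volume (Cube n a h))⁻¹ * ∫⁻ x in Cube n a h, (∏ i, ω i x) ^ q) *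
      ∏ i, ((volume (Cube n a h))⁻¹ *
        ∫⁻ x in Cube n a h, ω i x ^ (-(rconj (p i)))) ^ (q / rconj (p i))

/-- Hardy–Littlewood maximal operator (over cubes). -/
def HLMax (n : ℕ) (g : En n → ℝ≥0∞) (x : En n) : ℝ≥0∞ :=
  ⨆ (a : Fin n → ℝ) (h : ℝ) (_ : 0 < h) (_ : x ∈ Cube n a h),
    (volume (Cube n a h))⁻¹ * ∫⁻ y in Cube n a h, g y

/-- The Fujii–Wilson `A_∞` constant. -/
def AInfty (n : ℕ) (w : En n → ℝ≥0∞) : ℝ≥0∞ :=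
  ⨆ (a : Fin n → ℝ) (h : ℝ) (_ : 0 < h),
    (∫⁻ x in Cube n a h, w x)⁻¹ *
      ∫⁻ x in Cube n a h, HLMax n ((Cube n a h).indicator w) x

/-- Weighted `L^p` "norm" `(∫ F^p w)^{1/p}` for `ℝ≥0∞`-valued `F`. -/
def wnorm (n : ℕ) (p : ℝ) (w : En n → ℝ≥0∞) (F : En n → ℝ≥0∞) : ℝ≥0∞ :=
  (∫⁻ x, F x ^ p * w x) ^ (1 / p)

/-- Multilinear fractional maximal operator with rough homogeneous kernel `Ω`. -/
def MOmega (m n : ℕ) (α : ℝ) (Ω : (Fin m → En n) → ℝ) (f : Fin m → En n → ℝ)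
    (x : En n) : ℝ≥0∞ :=
  ⨆ (a : Fin n → ℝ) (h : ℝ) (_ : 0 < h) (_ : x ∈ Cube n a h),
    (volume (Cube n a h)) ^ (α / (n : ℝ) - m) *
      ∫⁻ y in univ.pi (fun _ : Fin m => Cube n a h),
        (‖Ω (fun i => x - y i)‖₊ : ℝ≥0∞) * ∏ i, (‖f i (y i)‖₊ : ℝ≥0∞)

/-- The `L^s((S^{n-1})^m)` norm of a (degree-zero homogeneous) kernel, realized through the
cone measure on the product of unit spheres. -/
def sphereNorm (m n : ℕ) (s : ℝ) (Ω : (Fin m → En n) → ℝ) : ℝ≥0∞ :=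
  eLpNorm Ω (ENNReal.ofReal s)
    (Measure.map (fun (y : Fin m → En n) (i : Fin m) => ‖y i‖⁻¹ • y i)
      (((n : ℝ≥0∞) ^ m) • volume.restrict (univ.pi fun _ : Fin m => Metric.ball (0 : En n) 1)))

/-- Euclidean norm of `(y₁, …, y_m) ∈ (ℝⁿ)^m`. -/
def bigNorm (m n : ℕ) (y : Fin m → En n) : ℝ := Real.sqrt (∑ i, ‖y i‖ ^ 2)

/-- Multilinear fractional integral with rough homogeneous kernel (absolute values). -/
def IOmega (m n : ℕ) (α : ℝ) (Ω : (Fin m → En n) → ℝ) (f : Fin m → En n → ℝ)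
    (x : En n) : ℝ≥0∞ :=
  ∫⁻ y : Fin m → En n,
    ENNReal.ofReal (bigNorm m n y ^ (α - (m * n : ℝ))) * (‖Ω y‖₊ : ℝ≥0∞) *
      ∏ i, (‖f i (x - y i)‖₊ : ℝ≥0∞)

/-- Standard dyadic cube `2^{-k}([0,1)^n + j)`. -/
def DyadicCube (n : ℕ) (k : ℤ) (j : Fin n → ℤ) : Set (En n) :=
  Cube n (fun i => (j i : ℝ) * (2:ℝ) ^ (-k)) ((2:ℝ) ^ (-k))

def IsDyadic (n : ℕ) (S : Set (En n)) : Prop := ∃ k j, S = DyadicCube n k j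

/-- The product of fractional averages `∏_i |S|^{α/(mn)-1} ∫_S |f_i|`. -/
def dyadAvg (m n : ℕ) (α : ℝ) (f : Fin m → En n → ℝ) (S : Set (En n)) : ℝ≥0∞ :=
  ∏ i, (volume S) ^ (α / (m * n : ℝ) - 1) * ∫⁻ y in S, (‖f i y‖₊ : ℝ≥0∞)

/-- Dyadic multilinear fractional maximal operator `M_α^d`. -/
def MFracDyadic (m n : ℕ) (α : ℝ) (f : Fin m → En n → ℝ) (x : En n) : ℝ≥0∞ :=
  ⨆ (k : ℤ) (j : Fin n → ℤ) (_ : x ∈ DyadicCube n k j), dyadAvg m n α f (DyadicCube n k j)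

/-- A maximal (Calderón–Zygmund) dyadic cube of the level set at height `t`. -/
def IsCZCube (m n : ℕ) (α : ℝ) (f : Fin m → En n → ℝ) (t : ℝ≥0∞) (S : Set (En n)) : Prop :=
  IsDyadic n S ∧ t < dyadAvg m n α f S ∧
    ∀ S', IsDyadic n S' → S ⊂ S' → ¬ t < dyadAvg m n α f S'

/-- The multiple weight constant `[ω]_{A_{P}}` of Lerner–Ombrosi–Pérez–Torres–Trujillo. -/
def ApVec (m n : ℕ) (p : Fin m → ℝ) (pp : ℝ) (ω : Fin m → En n → ℝ≥0∞) : ℝ≥0∞ :=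
  ⨆ (a : Fin n → ℝ) (h : ℝ) (_ : 0 < h),
    (∏ i, ((volume (Cube n a h))⁻¹ *
        ∫⁻ x in Cube n a h, ω i x ^ (1 - rconj (p i))) ^ (pp / rconj (p i))) *
      ((volume (Cube n a h))⁻¹ * ∫⁻ x in Cube n a h, ∏ i, ω i x ^ (pp / p i))

/-- `X`-average `‖g‖_{X,Q} = ‖τ_{ℓ(Q)}(g χ_Q)‖_X` of `g` over the cube `Q = Q(a,h)`,
for an abstract Banach-function-space norm functional `N`. -/
def Xavg (n : ℕ) (N : (En n → ℝ≥0∞) → ℝ≥0∞) (a : Fin n → ℝ) (h : ℝ)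
    (g : En n → ℝ≥0∞) : ℝ≥0∞ :=
  N (fun x => (Cube n a h).indicator g (h • x))

/-- Maximal operator `M_X` associated with the norm functional `N`. -/
def MX (n : ℕ) (N : (En n → ℝ≥0∞) → ℝ≥0∞) (g : En n → ℝ≥0∞) (x : En n) : ℝ≥0∞ :=
  ⨆ (a : Fin n → ℝ) (h : ℝ) (_ : 0 < h) (_ : x ∈ Cube n a h), Xavg n N a h g

/-- Weighted fractional maximal operator `M_{σ,α/m}`. -/
def MWFrac (n m : ℕ) (α : ℝ) (σ : En n → ℝ≥0∞) (f : En n → ℝ) (x : En n) : ℝ≥0∞ :=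
  ⨆ (a : Fin n → ℝ) (h : ℝ) (_ : 0 < h) (_ : x ∈ Cube n a h),
    (∫⁻ y in Cube n a h, σ y) ^ (α / (m * n : ℝ) - 1) *
      ∫⁻ y in Cube n a h, (‖f y‖₊ : ℝ≥0∞) * σ y

/-- The reverse Hölder exponent `r(w) = 1 + 1/(c_n [w]_{A_∞})`. -/
def rExp (n : ℕ) (A : ℝ) : ℝ := 1 + 1 / ((2:ℝ) ^ (11 + n) * A)

end

/-- every axis-parallel cube is contained in a cube of one of the `2^n`
translated dyadic grids `D_β`, `β ∈ {0,1/3}^n`, with at most `6` times the side length. -/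
theorem statement_0 (n : ℕ) (a : Fin n → ℝ) (h : ℝ) (hh : 0 < h) :
    ∃ β : Fin n → ℝ, (∀ i, β i = 0 ∨ β i = 1/3) ∧
      ∃ (k : ℤ) (j : Fin n → ℤ),
        Cube n a h ⊆ GridCube n β k j ∧ (2:ℝ) ^ (-k) ≤ 6 * h := by
  classical
  have h3 : (0:ℝ) < 3 * h := by linarith
  set c : ℤ := ⌈Real.logb 2 (3*h)⌉ with hc
  set k : ℤ := -c with hk
  set L : ℝ := (2:ℝ) ^ (-k) with hLdef
  have hkc : -k = c := by simp [hk]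
  have hLc : L = (2:ℝ) ^ (c:ℝ) := by
    rw [hLdef, hkc, ← Real.rpow_intCast]
  have hlogb : (2:ℝ) ^ (Real.logb 2 (3*h)) = 3*h :=
    Real.rpow_logb (by norm_num) (by norm_num) h3
  have hL1 : 3*h ≤ L := by
    rw [hLc, ← hlogb]
    exact (Real.rpow_le_rpow_left_iff (by norm_num)).mpr (Int.le_ceil _)
  have hL2 : L ≤ 6*h := by
    rw [hLc]
    have hcle : (c:ℝ) ≤ Real.logb 2 (3*h) + 1 := (Int.ceil_lt_add_one _).le
    calc (2:ℝ)^(c:ℝ) ≤ (2:ℝ)^(Real.logb 2 (3*h) + 1) :=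
          (Real.rpow_le_rpow_left_iff (by norm_num)).mpr hcle
      _ = 6*h := by rw [Real.rpow_add (by norm_num), hlogb]; ring
  have hLpos : (0:ℝ) < L := by positivity
  have hh3 : h ≤ L / 3 := by linarith
  refine ⟨fun i => if a i + h ≤ ((⌊a i / L⌋ : ℝ) + 1) * L then 0 else 1/3,
    fun i => by simp only []; split_ifs <;> simp, k,
    fun i => if a i + h ≤ ((⌊a i / L⌋ : ℝ) + 1) * L then ⌊a i / L⌋
      else (if Even k then ⌊a i / L⌋ else ⌊a i / L⌋ + 1), ?_, hL2⟩
  intro x hx i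
  have hxi := hx i
  obtain ⟨hx1, hx2⟩ := hxi
  set m : ℤ := ⌊a i / L⌋ with hm
  have hm1 : (m:ℝ) * L ≤ a i := by
    have := Int.floor_le (a i / L)
    calc (m:ℝ) * L ≤ (a i / L) * L := by
          exact mul_le_mul_of_nonneg_right this hLpos.le
      _ = a i := by field_simp
  have hm2 : a i < ((m:ℝ) + 1) * L := by
    have := Int.lt_floor_add_one (a i / L)
    calc a i = (a i / L) * L := by field_simp
      _ < ((m:ℝ) + 1) * L := by
          exact mul_lt_mul_of_pos_right (by exact_mod_cast this) hLpos
  by_cases hcase : a i + h ≤ ((m:ℝ) + 1) * L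
  · simp only [GridCube, Cube, mem_setOf_eq, hcase, if_pos, ← hm, ← hLdef]
    constructor
    · nlinarith
    · nlinarith
  · have ha23 : ((m:ℝ) + 2/3) * L < a i := by nlinarith
    rcases Int.even_or_odd k with hev | hod
    · have hne : (-1:ℝ) ^ k = 1 := hev.neg_one_zpow
      simp only [GridCube, Cube, mem_setOf_eq, ← hm, ← hLdef, if_neg hcase, if_pos hev, hne]
      push_cast
      constructor
      · nlinarith
      · nlinarith
    · have hne : (-1:ℝ) ^ k = -1 := hod.neg_one_zpow
      have hnev : ¬ Even k := Int.not_even_iff_odd.mpr hod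
      simp only [GridCube, Cube, mem_setOf_eq, ← hm, ← hLdef, if_neg hcase, if_neg hnev, hne]
      push_cast
      constructor
      · nlinarith
      · nlinarith
end

section
/- Let 0 ≤ α < mn and let f₁,…,f_m be locally integrable on ℝⁿ. Then for every x ∈ ℝⁿ, M_α(f⃗)(x) ≤ 6^{mn−α} · Σ_{β ∈ {0,1/3}ⁿ} M_α^{D_β}(f⃗)(x), where M_α^{D_β} is the fractional maximal operator restricted to cubes of the dyadic grid D_β. -/
open MeasureTheory ENNReal NNReal Set

lemma volume_cube (n : ℕ) (a : Fin n → ℝ) (h : ℝ) :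
    volume (Cube n a h) = ENNReal.ofReal h ^ n := by
  have heq : Cube n a h = (MeasurableEquiv.toLp 2 (Fin n → ℝ)).symm ⁻¹'
      (Set.univ.pi fun i => Set.Ico (a i) (a i + h)) := by
    ext x
    simp [Cube, Set.mem_pi]
  rw [heq, (EuclideanSpace.volume_preserving_symm_measurableEquiv_toLp (Fin n)).measure_preimage
    ((MeasurableSet.univ_pi fun i => measurableSet_Ico).nullMeasurableSet)]
  rw [volume_pi_pi]
  simp [Real.volume_Ico]

section Aux

lemma exists_k (h : ℝ) (hh : 0 < h) : ∃ k : ℤ, 3*h < (2:ℝ)^(-k) ∧ (2:ℝ)^(-k) ≤ 6*h := by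
  refine ⟨-(Int.log 2 (6*h)), ?_, ?_⟩ <;> rw [neg_neg]
  · have h1 := Int.lt_zpow_succ_log_self (by norm_num : 1 < 2) (6*h)
    have e1 : ((2:ℕ):ℝ) = (2:ℝ) := by norm_num
    rw [e1, zpow_add_one₀ (by norm_num : (2:ℝ) ≠ 0)] at h1
    linarith
  · have h1 := Int.zpow_log_le_self (b := 2) (by norm_num) (by linarith : (0:ℝ) < 6*h)
    have e1 : ((2:ℕ):ℝ) = (2:ℝ) := by norm_num
    rw [e1] at h1
    linarith

lemma grid1 (h ℓ : ℝ) (hh : 0 < h) (hℓ : 3*h < ℓ) (e : ℝ) (he : e = 1 ∨ e = -1) (a : ℝ) :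
    ∃ (b : Bool) (j : ℤ), Ico a (a+h) ⊆
      Ico (ℓ*((j:ℝ) + e*(if b then (1/3:ℝ) else 0))) (ℓ*((j:ℝ) + e*(if b then (1/3:ℝ) else 0)) + ℓ) := by
  have hℓ0 : 0 < ℓ := by linarith
  set j0 : ℤ := ⌊a/ℓ⌋ with hj0
  have h1 : (j0:ℝ)*ℓ ≤ a := (le_div_iff₀ hℓ0).mp (Int.floor_le _)
  have h2 : a < ((j0:ℝ)+1)*ℓ := by
    have := (div_lt_iff₀ hℓ0).mp (Int.lt_floor_add_one (a/ℓ))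
    exact this
  by_cases hc : a + h ≤ ((j0:ℝ)+1)*ℓ
  · exact ⟨false, j0, Ico_subset_Ico (by simp; linarith) (by simp; linarith)⟩
  · push_neg at hc
    set j1 : ℤ := ⌊(a - e*ℓ/3)/ℓ⌋ with hj1
    have h3 : (j1:ℝ)*ℓ ≤ a - e*ℓ/3 := (le_div_iff₀ hℓ0).mp (Int.floor_le _)
    have h4 : a - e*ℓ/3 < ((j1:ℝ)+1)*ℓ := (div_lt_iff₀ hℓ0).mp (Int.lt_floor_add_one _)
    refine ⟨true, j1, Ico_subset_Ico (by simp; linarith) ?_⟩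
    simp only [if_pos]
    by_contra hcon
    push_neg at hcon
    have hconq : ((j1:ℝ)+1)*ℓ + e*ℓ/3 < a + h := by
      have : ℓ*((j1:ℝ) + e*(1/3)) + ℓ = ((j1:ℝ)+1)*ℓ + e*ℓ/3 := by ring
      linarith [hcon, this.symm ▸ hcon]
    have hq1 : a < ((j1:ℝ)+1)*ℓ + e*ℓ/3 := by linarith
    have hpq : ((j0:ℝ)+1)*ℓ - (((j1:ℝ)+1)*ℓ + e*ℓ/3) = ℓ * (((j0 - j1 : ℤ):ℝ) - e/3) := by
      push_cast; ring
    have habs : (1/3:ℝ) ≤ |((j0 - j1 : ℤ):ℝ) - e/3| := by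
      set z : ℤ := j0 - j1 with hzdef
      rcases lt_trichotomy z 0 with hz | hz | hz
      · have hz1 : (z:ℝ) + 1 ≤ 0 := by exact_mod_cast Int.lt_iff_add_one_le.mp hz
        rw [le_abs]; right; rcases he with rfl | rfl <;> linarith
      · rw [le_abs]; rcases he with rfl | rfl
        · right; rw [hz]; norm_num
        · left; rw [hz]; norm_num
      · have hz1 : (1:ℝ) ≤ (z:ℝ) := by exact_mod_cast Int.lt_iff_add_one_le.mp hz
        rw [le_abs]; left; rcases he with rfl | rfl <;> linarith
    have hlt : |((j0:ℝ)+1)*ℓ - (((j1:ℝ)+1)*ℓ + e*ℓ/3)| < h := by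
      rw [abs_lt]
      constructor <;> linarith
    rw [hpq, abs_mul, abs_of_pos hℓ0] at hlt
    nlinarith [mul_le_mul_of_nonneg_left habs hℓ0.le]


lemma factor_le (m n : ℕ) (hm : 0 < m) (hn : 0 < n) (α : ℝ) (hα0 : 0 ≤ α) (hα : α < m*n)
    (h ℓ : ℝ) (hh : 0 < h) (hl : 0 < ℓ) (hl6 : ℓ ≤ 6*h) :
    (ENNReal.ofReal h ^ n) ^ (α/(m*n:ℝ) - 1) ≤
      (6:ℝ≥0∞) ^ ((n:ℝ) - α/m) * (ENNReal.ofReal ℓ ^ n) ^ (α/(m*n:ℝ) - 1) := by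
  set γ : ℝ := α/(m*n:ℝ) - 1 with hγ
  have hcast : ∀ x : ℝ, 0 < x → (ENNReal.ofReal x ^ n) ^ γ = ENNReal.ofReal (x ^ ((n:ℝ)*γ)) := by
    intro x hx
    rw [← ENNReal.rpow_natCast (ENNReal.ofReal x) n, ← ENNReal.rpow_mul,
      ENNReal.ofReal_rpow_of_pos hx]
  rw [hcast h hh, hcast ℓ hl]
  have h6 : (6:ℝ≥0∞) ^ ((n:ℝ) - α/m) = ENNReal.ofReal ((6:ℝ) ^ ((n:ℝ) - α/m)) := by
    rw [← ENNReal.ofReal_rpow_of_pos (by norm_num : (0:ℝ) < 6)]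
    norm_num
  rw [h6, ← ENNReal.ofReal_mul (by positivity)]
  apply ENNReal.ofReal_le_ofReal
  -- real inequality: h ^ (n*γ) ≤ 6^(n - α/m) * ℓ^(n*γ)
  have hm0 : (m:ℝ) ≠ 0 := Nat.cast_ne_zero.mpr hm.ne'
  have hn0 : (n:ℝ) ≠ 0 := Nat.cast_ne_zero.mpr hn.ne'
  have hexp : (n:ℝ) - α/m = -((n:ℝ)*γ) := by
    rw [hγ]; field_simp; ring
  have hγle : γ ≤ 0 := by
    rw [hγ]
    have hmn : (0:ℝ) < m*n := by positivity
    rw [sub_nonpos, div_le_one hmn]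
    push_cast; linarith
  have hγneg : (n:ℝ)*γ ≤ 0 := by
    have := mul_nonneg (Nat.cast_nonneg n : (0:ℝ) ≤ n) (neg_nonneg.mpr hγle)
    linarith
  have step : h ^ ((n:ℝ)*γ) ≤ (ℓ/6) ^ ((n:ℝ)*γ) := by
    apply Real.rpow_le_rpow_of_nonpos (by linarith) (by linarith) hγneg
  calc h ^ ((n:ℝ)*γ) ≤ (ℓ/6) ^ ((n:ℝ)*γ) := step
    _ = 6 ^ ((n:ℝ) - α/m) * ℓ ^ ((n:ℝ)*γ) := by
        rw [Real.div_rpow hl.le (by norm_num : (0:ℝ) ≤ 6), hexp, Real.rpow_neg (by norm_num)]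
        rw [div_eq_mul_inv, mul_comm]

end Aux

/-- pointwise domination of `M_α` by the sum of the `2^n` grid maximal
operators `M_α^{D_β}`, `β ∈ {0,1/3}^n`, with constant `6^{mn-α}`. -/
theorem statement_1 (m n : ℕ) (hm : 0 < m) (hn : 0 < n) (α : ℝ) (hα0 : 0 ≤ α)
    (hα : α < m * n) (f : Fin m → En n → ℝ)
    (hf : ∀ i, MeasureTheory.LocallyIntegrable (f i) volume) (x : En n) :
    MFrac m n α f x ≤ (6 : ℝ≥0∞) ^ ((m * n : ℝ) - α) *
      ∑ b : Fin n → Bool,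
        MFracGrid m n α (fun i => if b i then (1/3 : ℝ) else 0) f x := by
  refine iSup_le fun a => iSup_le fun h => iSup_le fun hpos => iSup_le fun hx => ?_
  obtain ⟨k, hk1, hk2⟩ := exists_k h hpos
  set ℓ : ℝ := (2:ℝ)^(-k) with hℓdef
  have hℓ0 : 0 < ℓ := by positivity
  have he : ((-1:ℝ)^k = 1) ∨ ((-1:ℝ)^k = -1) := by
    rcases Int.even_or_odd k with hk | hk
    · left; exact hk.neg_one_zpow
    · right; exact hk.neg_one_zpow
  choose b j hbj using fun i => grid1 h ℓ hpos hk1 ((-1:ℝ)^k) he (a i)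
  set β : Fin n → ℝ := fun i => if b i then (1/3:ℝ) else 0 with hβdef
  have hsub : Cube n a h ⊆ GridCube n β k j := by
    intro y hy i
    have := hbj i ⟨(hy i).1, (hy i).2⟩
    exact ⟨this.1, this.2⟩
  have hxg : x ∈ GridCube n β k j := hsub hx
  have vQ : volume (Cube n a h) = ENNReal.ofReal h ^ n := volume_cube n a h
  have vP : volume (GridCube n β k j) = ENNReal.ofReal ℓ ^ n := volume_cube n _ ℓ
  set γ : ℝ := α / (m * n : ℝ) - 1 with hγdef
  set c : ℝ≥0∞ := (6:ℝ≥0∞) ^ ((n:ℝ) - α/m) with hcdef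
  have key : (∏ i, (volume (Cube n a h)) ^ γ * ∫⁻ y in Cube n a h, (‖f i y‖₊ : ℝ≥0∞)) ≤
      (6:ℝ≥0∞) ^ ((m * n : ℝ) - α) *
        ∏ i, (volume (GridCube n β k j)) ^ γ *
          ∫⁻ y in GridCube n β k j, (‖f i y‖₊ : ℝ≥0∞) := by
    have step1 : ∀ i : Fin m,
        (volume (Cube n a h)) ^ γ * ∫⁻ y in Cube n a h, (‖f i y‖₊ : ℝ≥0∞) ≤
        c * ((volume (GridCube n β k j)) ^ γ *
          ∫⁻ y in GridCube n β k j, (‖f i y‖₊ : ℝ≥0∞)) := by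
      intro i
      rw [← mul_assoc]
      apply mul_le_mul'
      · rw [vQ, vP]
        exact factor_le m n hm hn α hα0 hα h ℓ hpos hℓ0 hk2
      · exact lintegral_mono_set hsub
    calc (∏ i, (volume (Cube n a h)) ^ γ * ∫⁻ y in Cube n a h, (‖f i y‖₊ : ℝ≥0∞))
        ≤ ∏ i : Fin m, c * ((volume (GridCube n β k j)) ^ γ *
            ∫⁻ y in GridCube n β k j, (‖f i y‖₊ : ℝ≥0∞)) :=
          Finset.prod_le_prod' fun i _ => step1 i
      _ = c ^ m * ∏ i, (volume (GridCube n β k j)) ^ γ *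
            ∫⁻ y in GridCube n β k j, (‖f i y‖₊ : ℝ≥0∞) := by
          rw [Finset.prod_mul_distrib, Finset.prod_const, Finset.card_univ,
            Fintype.card_fin]
      _ = (6:ℝ≥0∞) ^ ((m * n : ℝ) - α) * ∏ i, (volume (GridCube n β k j)) ^ γ *
            ∫⁻ y in GridCube n β k j, (‖f i y‖₊ : ℝ≥0∞) := by
          congr 1
          rw [hcdef, ← ENNReal.rpow_natCast ((6:ℝ≥0∞) ^ ((n:ℝ) - α/m)) m,
            ← ENNReal.rpow_mul]
          congr 1
          have hm0 : (m:ℝ) ≠ 0 := Nat.cast_ne_zero.mpr hm.ne'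
          field_simp
  refine key.trans (mul_le_mul_right ?_ _)
  have hgrid : (∏ i, (volume (GridCube n β k j)) ^ γ *
      ∫⁻ y in GridCube n β k j, (‖f i y‖₊ : ℝ≥0∞)) ≤ MFracGrid m n α β f x := by
    unfold MFracGrid
    exact le_iSup_of_le k (le_iSup_of_le j (le_iSup_of_le hxg le_rfl))
  refine hgrid.trans ?_
  have : β = fun i => if b i then (1/3:ℝ) else 0 := hβdef
  rw [this]
  exact Finset.single_le_sum (f := fun b' : Fin n → Bool =>
    MFracGrid m n α (fun i => if b' i then (1/3:ℝ) else 0) f x)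
    (fun _ _ => zero_le) (Finset.mem_univ b)
end

section
/- Let 0 ≤ α < mn, a = 2^{m(n+1)}, and let f₁,…,f_m be locally integrable. For k ∈ ℤ let Ω_k = {x : M_α^d(f⃗)(x) > a^k}, where M_α^d is the dyadic multilinear fractional maximal operator, and write Ω_k = ∪_j Q_j^k as a union of maximal dyadic cubes. Then the family {Q_j^k} is sparse, i.e., |Ω_{k+1} ∩ Q_j^k| ≤ (1/2)|Q_j^k| for all j, k. -/
open MeasureTheory ENNReal NNReal Set

noncomputable section Aux

namespace Sparse4

lemma cube_preimage (n : ℕ) (a : Fin n → ℝ) (h : ℝ) :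
    Cube n a h = (MeasurableEquiv.toLp 2 (Fin n → ℝ)).symm ⁻¹'
      (Set.univ.pi fun i => Set.Ico (a i) (a i + h)) := by
  ext x
  simp only [Set.mem_preimage, Set.mem_univ_pi, Set.mem_Ico]
  exact Iff.rfl

lemma cube_measurable (n : ℕ) (a : Fin n → ℝ) (h : ℝ) : MeasurableSet (Cube n a h) := by
  rw [cube_preimage]
  exact (MeasurableEquiv.toLp 2 (Fin n → ℝ)).symm.measurable
    (MeasurableSet.univ_pi fun i => measurableSet_Ico)

lemma volume_cube (n : ℕ) (a : Fin n → ℝ) (h : ℝ) :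
    volume (Cube n a h) = ENNReal.ofReal h ^ n := by
  rw [cube_preimage,
    (EuclideanSpace.volume_preserving_symm_measurableEquiv_toLp (Fin n)).measure_preimage
      (MeasurableSet.univ_pi fun i => measurableSet_Ico).nullMeasurableSet,
    volume_pi_pi]
  simp [Real.volume_Ico]

lemma cube_lintegral_lt_top {n : ℕ} {g : En n → ℝ} (hg : LocallyIntegrable g volume)
    (a : Fin n → ℝ) (h : ℝ) : ∫⁻ y in Cube n a h, (‖g y‖₊ : ℝ≥0∞) ≠ ⊤ := by
  set c : En n := (WithLp.equiv 2 (Fin n → ℝ)).symm a with hc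
  set R : ℝ := Real.sqrt (n * (max h 0) ^ 2) with hR
  have hsub : Cube n a h ⊆ Metric.closedBall c R := by
    intro x hx
    have hdist : dist x c ≤ R := by
      rw [EuclideanSpace.dist_eq]
      apply Real.sqrt_le_sqrt
      calc ∑ i, dist (x i) (c i) ^ 2 ≤ ∑ _i : Fin n, (max h 0) ^ 2 := by
            apply Finset.sum_le_sum
            intro i _
            have hci : c i = a i := rfl
            have h1 : dist (x i) (c i) ≤ max h 0 := by
              rw [hci, Real.dist_eq, abs_le]
              obtain ⟨hl, hr⟩ := hx i
              constructor
              · have : (0:ℝ) ≤ max h 0 := le_max_right _ _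
                linarith
              · have : x i - a i < h := by linarith
                exact this.le.trans (le_max_left _ _)
            exact pow_le_pow_left₀ dist_nonneg h1 2
        _ = n * (max h 0) ^ 2 := by
            rw [Finset.sum_const, Finset.card_univ, Fintype.card_fin, nsmul_eq_mul]
    exact Metric.mem_closedBall.mpr hdist
  have hint : IntegrableOn g (Metric.closedBall c R) volume :=
    hg.integrableOn_isCompact (isCompact_closedBall c R)
  have hint2 : IntegrableOn g (Cube n a h) volume := hint.mono_set hsub
  exact hint2.2.ne

lemma mem_dyadic_iff {n : ℕ} {k : ℤ} {j : Fin n → ℤ} {x : En n} :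
    x ∈ DyadicCube n k j ↔
      ∀ i, (j i : ℝ) * 2 ^ (-k) ≤ x i ∧ x i < ((j i : ℝ) + 1) * 2 ^ (-k) := by
  constructor
  · intro H i
    obtain ⟨h1, h2⟩ := H i
    have h1' : (j i : ℝ) * 2 ^ (-k) ≤ x i := h1
    have h2' : x i < (j i : ℝ) * 2 ^ (-k) + 2 ^ (-k) := h2
    exact ⟨h1', by nlinarith⟩
  · intro H i
    obtain ⟨h1, h2⟩ := H i
    refine ⟨h1, ?_⟩
    show x i < (j i : ℝ) * 2 ^ (-k) + 2 ^ (-k)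
    nlinarith

lemma dyadic_corner_mem {n : ℕ} (k : ℤ) (j : Fin n → ℤ) :
    ((WithLp.equiv 2 (Fin n → ℝ)).symm (fun i => (j i : ℝ) * 2 ^ (-k)) : En n)
      ∈ DyadicCube n k j := by
  rw [mem_dyadic_iff]
  intro i
  have h2k : (0:ℝ) < 2 ^ (-k) := zpow_pos two_pos _
  have hxi : ((WithLp.equiv 2 (Fin n → ℝ)).symm (fun i => (j i : ℝ) * 2 ^ (-k)) : En n) i
      = (j i : ℝ) * 2 ^ (-k) := rfl
  rw [hxi]
  exact ⟨le_refl _, by nlinarith⟩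

lemma dyadic_nonempty {n : ℕ} (k : ℤ) (j : Fin n → ℤ) : (DyadicCube n k j).Nonempty :=
  ⟨_, dyadic_corner_mem k j⟩

lemma cast_pow_sub {k k' : ℤ} (hk : k' ≤ k) :
    ((2 ^ (k - k').toNat : ℤ) : ℝ) = (2:ℝ) ^ (k - k') := by
  push_cast
  rw [← zpow_natCast (2:ℝ), Int.toNat_of_nonneg (sub_nonneg.2 hk)]

lemma zpow_sub_mul {k k' : ℤ} : (2:ℝ) ^ (k - k') * 2 ^ (-k) = 2 ^ (-k') := by
  rw [← zpow_add₀ (two_ne_zero : (2:ℝ) ≠ 0)]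
  congr 1
  ring

lemma dyadic_subset_of_mem {n : ℕ} {k k' : ℤ} (hk : k' ≤ k) {j j' : Fin n → ℤ} {x : En n}
    (hx : x ∈ DyadicCube n k j) (hx' : x ∈ DyadicCube n k' j') :
    DyadicCube n k j ⊆ DyadicCube n k' j' := by
  have h2k : (0:ℝ) < 2 ^ (-k) := zpow_pos two_pos _
  set N : ℤ := 2 ^ (k - k').toNat with hNdef
  have hN : (N : ℝ) * 2 ^ (-k) = 2 ^ (-k') := by
    rw [hNdef, cast_pow_sub hk, zpow_sub_mul]
  rw [mem_dyadic_iff] at hx hx'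
  intro y hy
  rw [mem_dyadic_iff] at hy ⊢
  intro i
  obtain ⟨ha, hb⟩ := hx i
  obtain ⟨hc, hd⟩ := hx' i
  obtain ⟨he, hf⟩ := hy i
  have key1 : (j' i : ℝ) * N ≤ (j i : ℝ) := by
    have h1 : ((j' i : ℝ) * N) * 2 ^ (-k) < ((j i : ℝ) + 1) * 2 ^ (-k) := by
      rw [mul_assoc, hN]
      exact hc.trans_lt hb
    have h2 : (j' i : ℝ) * N < (j i : ℝ) + 1 := (mul_lt_mul_iff_of_pos_right h2k).mp h1
    have h3 : j' i * N < j i + 1 := by exact_mod_cast h2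
    exact_mod_cast Int.lt_add_one_iff.mp h3
  have key2 : (j i : ℝ) + 1 ≤ ((j' i : ℝ) + 1) * N := by
    have h1 : (j i : ℝ) * 2 ^ (-k) < (((j' i : ℝ) + 1) * N) * 2 ^ (-k) := by
      rw [mul_assoc, hN]
      exact ha.trans_lt hd
    have h2 : (j i : ℝ) < ((j' i : ℝ) + 1) * N := (mul_lt_mul_iff_of_pos_right h2k).mp h1
    have h3 : j i < (j' i + 1) * N := by exact_mod_cast h2
    exact_mod_cast Int.add_one_le_iff.mpr h3
  constructor
  · calc (j' i : ℝ) * 2 ^ (-k') = ((j' i : ℝ) * N) * 2 ^ (-k) := by rw [mul_assoc, hN]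
      _ ≤ (j i : ℝ) * 2 ^ (-k) := (mul_le_mul_iff_of_pos_right h2k).mpr key1
      _ ≤ y i := he
  · calc y i < ((j i : ℝ) + 1) * 2 ^ (-k) := hf
      _ ≤ (((j' i : ℝ) + 1) * N) * 2 ^ (-k) := (mul_le_mul_iff_of_pos_right h2k).mpr key2
      _ = ((j' i : ℝ) + 1) * 2 ^ (-k') := by rw [mul_assoc, hN]

lemma dyadic_nested {n : ℕ} {k k' : ℤ} {j j' : Fin n → ℤ} {x : En n}
    (hx : x ∈ DyadicCube n k j) (hx' : x ∈ DyadicCube n k' j') :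
    DyadicCube n k j ⊆ DyadicCube n k' j' ∨ DyadicCube n k' j' ⊆ DyadicCube n k j := by
  rcases le_total k' k with h | h
  · exact Or.inl (dyadic_subset_of_mem h hx hx')
  · exact Or.inr (dyadic_subset_of_mem h hx' hx)

lemma scale_le_of_subset {n : ℕ} (hn : 0 < n) {k k' : ℤ} {j j' : Fin n → ℤ}
    (hsub : DyadicCube n k j ⊆ DyadicCube n k' j') : k' ≤ k := by
  by_contra hlt
  push_neg at hlt
  have h2k : (0:ℝ) < 2 ^ (-k) := zpow_pos two_pos _
  have h2k' : (0:ℝ) < 2 ^ (-k') := zpow_pos two_pos _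
  have hltpow : (2:ℝ) ^ (-k') < 2 ^ (-k) := zpow_lt_zpow_right₀ one_lt_two (by omega)
  set x : En n := (WithLp.equiv 2 (Fin n → ℝ)).symm (fun i => (j i : ℝ) * 2 ^ (-k)) with hxdef
  set y : En n := (WithLp.equiv 2 (Fin n → ℝ)).symm
    (fun i => (j i : ℝ) * 2 ^ (-k) + 2 ^ (-k')) with hydef
  have hxQ : x ∈ DyadicCube n k j := dyadic_corner_mem k j
  have hyQ : y ∈ DyadicCube n k j := by
    rw [mem_dyadic_iff]
    intro i
    have hyi : y i = (j i : ℝ) * 2 ^ (-k) + 2 ^ (-k') := rfl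
    rw [hyi]
    constructor
    · linarith
    · nlinarith
  have hxQ' := hsub hxQ
  have hyQ' := hsub hyQ
  rw [mem_dyadic_iff] at hxQ' hyQ'
  set i0 : Fin n := ⟨0, hn⟩
  obtain ⟨ha, _⟩ := hxQ' i0
  obtain ⟨_, hb⟩ := hyQ' i0
  have hyx : y i0 = x i0 + 2 ^ (-k') := rfl
  rw [hyx] at hb
  have : x i0 < (j' i0 : ℝ) * 2 ^ (-k') := by nlinarith
  linarith

lemma index_eq_of_subset {n : ℕ} {k : ℤ} {j j' : Fin n → ℤ}
    (hsub : DyadicCube n k j ⊆ DyadicCube n k j') : j = j' := by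
  funext i
  have h2k : (0:ℝ) < 2 ^ (-k) := zpow_pos two_pos _
  have hx := hsub (dyadic_corner_mem k j)
  rw [mem_dyadic_iff] at hx
  obtain ⟨h1, h2⟩ := hx i
  have hxi : ((WithLp.equiv 2 (Fin n → ℝ)).symm (fun i => (j i : ℝ) * 2 ^ (-k)) : En n) i
      = (j i : ℝ) * 2 ^ (-k) := rfl
  rw [hxi] at h1 h2
  have e1 : (j' i : ℝ) ≤ j i := (mul_le_mul_iff_of_pos_right h2k).mp h1
  have e2 : (j i : ℝ) < (j' i : ℝ) + 1 := by
    have := (mul_lt_mul_iff_of_pos_right h2k).mp h2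
    linarith
  have e1' : j' i ≤ j i := by exact_mod_cast e1
  have e2' : (j i : ℤ) < j' i + 1 := by exact_mod_cast e2
  omega

lemma dyadic_volume (n : ℕ) (k : ℤ) (j : Fin n → ℤ) :
    volume (DyadicCube n k j) = ENNReal.ofReal ((2:ℝ) ^ (-k)) ^ n :=
  volume_cube n _ _

lemma dyadic_volume_ne_zero {n : ℕ} (k : ℤ) (j : Fin n → ℤ) :
    volume (DyadicCube n k j) ≠ 0 := by
  rw [dyadic_volume]
  exact pow_ne_zero _ (ENNReal.ofReal_pos.mpr (zpow_pos two_pos _)).ne'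

lemma dyadic_volume_ne_top {n : ℕ} (k : ℤ) (j : Fin n → ℤ) :
    volume (DyadicCube n k j) ≠ ⊤ := by
  rw [dyadic_volume]
  exact pow_ne_top ENNReal.ofReal_ne_top

lemma parent_subset {n : ℕ} (k : ℤ) (j : Fin n → ℤ) :
    DyadicCube n k j ⊆ DyadicCube n (k-1) (fun i => j i / 2) := by
  intro y hy
  rw [mem_dyadic_iff] at hy ⊢
  intro i
  obtain ⟨h1, h2⟩ := hy i
  have h2k : (0:ℝ) < 2 ^ (-k) := zpow_pos two_pos _
  have hdiv : 2 * (j i / 2) ≤ j i ∧ j i ≤ 2 * (j i / 2) + 1 := by omega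
  have hh : (2:ℝ) ^ (-(k-1)) = 2 * 2 ^ (-k) := by
    rw [show -(k-1) = 1 + -k by ring, zpow_add₀ (two_ne_zero : (2:ℝ) ≠ 0), zpow_one]
  rw [hh]
  have hc1 : ((2 * (j i / 2) : ℤ) : ℝ) ≤ ((j i : ℤ) : ℝ) := by exact_mod_cast hdiv.1
  have hc2 : ((j i : ℤ) : ℝ) ≤ ((2 * (j i / 2) + 1 : ℤ) : ℝ) := by exact_mod_cast hdiv.2
  push_cast at hc1 hc2
  constructor
  · nlinarith
  · nlinarith

lemma parent_ne {n : ℕ} (hn : 0 < n) (k : ℤ) (j : Fin n → ℤ) :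
    DyadicCube n k j ≠ DyadicCube n (k-1) (fun i => j i / 2) := by
  intro he
  have hsub : DyadicCube n (k-1) (fun i => j i / 2) ⊆ DyadicCube n k j := by
    rw [← he]
  have : k ≤ k - 1 := scale_le_of_subset hn hsub
  omega

lemma parent_volume {n : ℕ} (k : ℤ) (j : Fin n → ℤ) :
    volume (DyadicCube n (k-1) (fun i => j i / 2)) = 2 ^ n * volume (DyadicCube n k j) := by
  rw [dyadic_volume, dyadic_volume]
  have hh : (2:ℝ) ^ (-(k-1)) = 2 * 2 ^ (-k) := by
    rw [show -(k-1) = 1 + -k by ring, zpow_add₀ (two_ne_zero : (2:ℝ) ≠ 0), zpow_one]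
  rw [hh, ENNReal.ofReal_mul (by norm_num : (0:ℝ) ≤ 2), mul_pow]
  norm_num

lemma dyadic_measurable {n : ℕ} (k : ℤ) (j : Fin n → ℤ) :
    MeasurableSet (DyadicCube n k j) := cube_measurable n _ _

lemma tsum_prod_rpow {ι : Type*} [Countable ι] [MeasurableSpace ι] [MeasurableSingletonClass ι]
    {m : ℕ} (hm : 0 < m) (g : Fin m → ι → ℝ≥0∞) :
    ∑' d, ∏ i, g i d ^ ((m:ℝ)⁻¹) ≤ ∏ i, (∑' d, g i d) ^ ((m:ℝ)⁻¹) := by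
  have hmR : ((m:ℝ)) ≠ 0 := Nat.cast_ne_zero.mpr hm.ne'
  have h := ENNReal.lintegral_prod_norm_pow_le (μ := (Measure.count : Measure ι)) Finset.univ
    (f := g) (fun i _ => (measurable_of_countable _).aemeasurable)
    (p := fun _ => (m:ℝ)⁻¹) ?_ (fun i _ => by positivity)
  · calc ∑' d, ∏ i, g i d ^ ((m:ℝ)⁻¹)
        = ∫⁻ d, ∏ i, g i d ^ ((m:ℝ)⁻¹) ∂(Measure.count) := (lintegral_count _).symm
      _ ≤ ∏ i, (∫⁻ d, g i d ∂(Measure.count)) ^ ((m:ℝ)⁻¹) := h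
      _ = ∏ i, (∑' d, g i d) ^ ((m:ℝ)⁻¹) := by
          apply Finset.prod_congr rfl
          intro i _
          rw [lintegral_count]
  · rw [Finset.sum_const, Finset.card_univ, Fintype.card_fin, nsmul_eq_mul]
    field_simp

end Sparse4

end Aux

open Sparse4

/-- with `a = 2^{m(n+1)}`, the maximal dyadic cubes of the level sets
`Ω_k = {M_α^d(f⃗) > a^k}` form a sparse family: `|Ω_{k+1} ∩ Q_j^k| ≤ (1/2)|Q_j^k|`. -/
theorem statement_4 (m n : ℕ) (hm : 0 < m) (hn : 0 < n) (α : ℝ) (hα0 : 0 ≤ α)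
    (hα : α < m * n) (f : Fin m → En n → ℝ)
    (hf : ∀ i, MeasureTheory.LocallyIntegrable (f i) volume)
    (k : ℤ) (S : Set (En n))
    (hS : IsCZCube m n α f (((2:ℝ≥0∞) ^ (m * (n+1))) ^ k) S) :
    volume ({x | ((2:ℝ≥0∞) ^ (m * (n+1))) ^ (k+1) < MFracDyadic m n α f x} ∩ S) ≤
      (1/2 : ℝ≥0∞) * volume S := by

  classical
  obtain ⟨⟨κ, j₀, rfl⟩, hSlb, hSmax⟩ := hS
  set A : ℝ≥0∞ := (2:ℝ≥0∞) ^ (m * (n+1)) with hAdef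
  set t : ℝ≥0∞ := A ^ (k+1) with htdef
  have h2top : (2:ℝ≥0∞) ≠ ⊤ := ENNReal.ofNat_ne_top
  have h20 : (2:ℝ≥0∞) ≠ 0 := two_ne_zero
  have hA0 : A ≠ 0 := pow_ne_zero _ h20
  have hAtop : A ≠ ⊤ := pow_ne_top h2top
  have hA1 : (1:ℝ≥0∞) ≤ A := one_le_pow_of_one_le' one_le_two _
  have ht0 : t ≠ 0 := (ENNReal.zpow_pos hA0 hAtop _).ne'
  have httop : t ≠ ⊤ := (ENNReal.zpow_lt_top hA0 hAtop _).ne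
  have hmR : (0:ℝ) < (m:ℝ) := Nat.cast_pos.mpr hm
  have hnR : (0:ℝ) < (n:ℝ) := Nat.cast_pos.mpr hn
  have hV0 : volume (DyadicCube n κ j₀) ≠ 0 := dyadic_volume_ne_zero κ j₀
  have hVtop : volume (DyadicCube n κ j₀) ≠ ⊤ := dyadic_volume_ne_top κ j₀
  set r : ℝ := α / ((m:ℝ) * (n:ℝ)) - 1 with hrdef
  have hr_eq : α / (m * n : ℝ) - 1 = r := rfl
  set C : Set (ℤ × (Fin n → ℤ)) := {d | DyadicCube n d.1 d.2 ⊆ DyadicCube n κ j₀ ∧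
    t < dyadAvg m n α f (DyadicCube n d.1 d.2)} with hCdef
  set M : Set (ℤ × (Fin n → ℤ)) := {d | d ∈ C ∧ ∀ d' ∈ C,
    DyadicCube n d.1 d.2 ⊆ DyadicCube n d'.1 d'.2 → d' = d} with hMdef
  -- selection of maximal cubes
  have scale_lb : ∀ d ∈ C, κ ≤ d.1 := fun d hd => scale_le_of_subset hn hd.1
  have sel : ∀ d ∈ C, ∃ d' ∈ M, DyadicCube n d.1 d.2 ⊆ DyadicCube n d'.1 d'.2 := by
    intro d hd
    obtain ⟨z₀, ⟨ds, hdsC, hsubs, hzs⟩, hmin⟩ :=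
      Int.exists_least_of_bdd
        (P := fun z => ∃ d', d' ∈ C ∧ DyadicCube n d.1 d.2 ⊆ DyadicCube n d'.1 d'.2 ∧ d'.1 = z)
        ⟨κ, fun z ⟨d', hd', _, hz⟩ => hz ▸ scale_lb d' hd'⟩
        ⟨d.1, d, hd, subset_rfl, rfl⟩
    refine ⟨ds, ⟨hdsC, ?_⟩, hsubs⟩
    intro d' hd' hsub2
    have h1 : d'.1 ≤ ds.1 := scale_le_of_subset hn hsub2
    have h2 : z₀ ≤ d'.1 := hmin d'.1 ⟨d', hd', hsubs.trans hsub2, rfl⟩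
    have h3 : d'.1 = ds.1 := by omega
    have hsub3 : DyadicCube n ds.1 ds.2 ⊆ DyadicCube n ds.1 d'.2 := by
      rw [h3] at hsub2; exact hsub2
    have h4 : ds.2 = d'.2 := index_eq_of_subset hsub3
    exact Prod.ext h3 h4.symm
  -- covering
  have cover : {x | t < MFracDyadic m n α f x} ∩ DyadicCube n κ j₀ ⊆
      ⋃ d ∈ M, DyadicCube n d.1 d.2 := by
    rintro x ⟨hx1, hx2⟩
    have hx1' : t < MFracDyadic m n α f x := hx1
    simp only [MFracDyadic, lt_iSup_iff] at hx1'
    obtain ⟨κ', j', hmem, hlt⟩ := hx1'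
    have hQsubS : DyadicCube n κ' j' ⊆ DyadicCube n κ j₀ := by
      rcases dyadic_nested hmem hx2 with hsub | hsub
      · exact hsub
      · by_cases heq : DyadicCube n κ' j' ⊆ DyadicCube n κ j₀
        · exact heq
        · exfalso
          have hss : DyadicCube n κ j₀ ⊂ DyadicCube n κ' j' := by
            refine ssubset_of_subset_of_ne hsub ?_
            intro he
            exact heq (by rw [← he])
          have hb := hSmax _ ⟨κ', j', rfl⟩ hss
          exact hb (lt_of_le_of_lt (ENNReal.zpow_le_of_le hA1 (by omega)) hlt)
    obtain ⟨d', hd'M, hsub'⟩ := sel (κ', j') ⟨hQsubS, hlt⟩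
    exact Set.mem_biUnion hd'M (hsub' hmem)
  -- disjointness
  have hdisj : Pairwise (Function.onFun Disjoint fun d : ↥M => DyadicCube n (d:ℤ × (Fin n → ℤ)).1 d.1.2) := by
    intro d₁ d₂ hne
    simp only [Function.onFun]
    rw [Set.disjoint_left]
    intro a ha1 ha2
    rcases dyadic_nested ha1 ha2 with hsub | hsub
    · exact hne (Subtype.ext ((d₁.prop.2 d₂.1 d₂.prop.1 hsub).symm))
    · exact hne (Subtype.ext (d₂.prop.2 d₁.1 d₁.prop.1 hsub))
  -- volume and integral notation
  set V : ℝ≥0∞ := volume (DyadicCube n κ j₀) with hVdef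
  set PI : ℝ≥0∞ := ∏ i, ∫⁻ y in DyadicCube n κ j₀, (‖f i y‖₊ : ℝ≥0∞) with hPIdef
  -- product manipulation
  have prod_eq : ∀ (v : ℝ≥0∞) (G : Fin m → ℝ≥0∞),
      ∏ i, v ^ r * G i = v ^ (r * (m:ℝ)) * ∏ i, G i := by
    intro v G
    rw [Finset.prod_mul_distrib, Finset.prod_const, Finset.card_univ, Fintype.card_fin]
    congr 1
    rw [ENNReal.rpow_mul, ENNReal.rpow_natCast]
  have exps : r * (m:ℝ) + (m:ℝ) = α / (n:ℝ) := by
    rw [hrdef]; field_simp; ring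
  have han : (0:ℝ) ≤ α / (n:ℝ) := div_nonneg hα0 hnR.le
  have hminv : (0:ℝ) ≤ (m:ℝ)⁻¹ := by positivity
  -- per-cube bound
  have cube_bd : ∀ d : ℤ × (Fin n → ℤ), d ∈ M →
      volume (DyadicCube n d.1 d.2) ≤ (t⁻¹ * V ^ (α/(n:ℝ))) ^ ((m:ℝ)⁻¹) *
        ∏ i, (∫⁻ y in DyadicCube n d.1 d.2, (‖f i y‖₊ : ℝ≥0∞)) ^ ((m:ℝ)⁻¹) := by
    intro d hd
    have hv0 : volume (DyadicCube n d.1 d.2) ≠ 0 := dyadic_volume_ne_zero _ _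
    have hvtop : volume (DyadicCube n d.1 d.2) ≠ ⊤ := dyadic_volume_ne_top _ _
    have hvV : volume (DyadicCube n d.1 d.2) ≤ V := measure_mono hd.1.1
    have havg : t ≤ volume (DyadicCube n d.1 d.2) ^ (r * (m:ℝ)) *
        ∏ i, ∫⁻ y in DyadicCube n d.1 d.2, (‖f i y‖₊ : ℝ≥0∞) := by
      have h1 : t ≤ dyadAvg m n α f (DyadicCube n d.1 d.2) := hd.1.2.le
      rw [dyadAvg, hr_eq, prod_eq] at h1
      exact h1
    have step1 : t * volume (DyadicCube n d.1 d.2) ^ ((m:ℝ)) ≤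
        V ^ (α/(n:ℝ)) * ∏ i, ∫⁻ y in DyadicCube n d.1 d.2, (‖f i y‖₊ : ℝ≥0∞) := by
      calc t * volume (DyadicCube n d.1 d.2) ^ ((m:ℝ))
          ≤ (volume (DyadicCube n d.1 d.2) ^ (r * (m:ℝ)) *
              ∏ i, ∫⁻ y in DyadicCube n d.1 d.2, (‖f i y‖₊ : ℝ≥0∞)) *
            volume (DyadicCube n d.1 d.2) ^ ((m:ℝ)) := mul_le_mul_left havg _
        _ = volume (DyadicCube n d.1 d.2) ^ (r * (m:ℝ)) *
              volume (DyadicCube n d.1 d.2) ^ ((m:ℝ)) *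
              ∏ i, ∫⁻ y in DyadicCube n d.1 d.2, (‖f i y‖₊ : ℝ≥0∞) := by ring
        _ = volume (DyadicCube n d.1 d.2) ^ (r * (m:ℝ) + (m:ℝ)) *
              ∏ i, ∫⁻ y in DyadicCube n d.1 d.2, (‖f i y‖₊ : ℝ≥0∞) := by
            rw [ENNReal.rpow_add _ _ hv0 hvtop]
        _ = volume (DyadicCube n d.1 d.2) ^ (α/(n:ℝ)) *
              ∏ i, ∫⁻ y in DyadicCube n d.1 d.2, (‖f i y‖₊ : ℝ≥0∞) := by rw [exps]
        _ ≤ V ^ (α/(n:ℝ)) * ∏ i, ∫⁻ y in DyadicCube n d.1 d.2, (‖f i y‖₊ : ℝ≥0∞) :=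
            mul_le_mul_left (ENNReal.rpow_le_rpow hvV han) _
    have step2 : volume (DyadicCube n d.1 d.2) ^ ((m:ℝ)) ≤
        t⁻¹ * (V ^ (α/(n:ℝ)) * ∏ i, ∫⁻ y in DyadicCube n d.1 d.2, (‖f i y‖₊ : ℝ≥0∞)) := by
      have h2 := mul_le_mul_right step1 t⁻¹
      rwa [← mul_assoc, ENNReal.inv_mul_cancel ht0 httop, one_mul] at h2
    have step3 : volume (DyadicCube n d.1 d.2) ≤
        (t⁻¹ * (V ^ (α/(n:ℝ)) * ∏ i, ∫⁻ y in DyadicCube n d.1 d.2, (‖f i y‖₊ : ℝ≥0∞))) ^ ((m:ℝ)⁻¹) := by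
      have h3 := ENNReal.rpow_le_rpow step2 hminv
      rwa [← ENNReal.rpow_mul, mul_inv_cancel₀ hmR.ne', ENNReal.rpow_one] at h3
    calc volume (DyadicCube n d.1 d.2)
        ≤ (t⁻¹ * (V ^ (α/(n:ℝ)) * ∏ i, ∫⁻ y in DyadicCube n d.1 d.2, (‖f i y‖₊ : ℝ≥0∞))) ^ ((m:ℝ)⁻¹) := step3
      _ = ((t⁻¹ * V ^ (α/(n:ℝ))) * ∏ i, ∫⁻ y in DyadicCube n d.1 d.2, (‖f i y‖₊ : ℝ≥0∞)) ^ ((m:ℝ)⁻¹) := by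
          rw [mul_assoc]
      _ = (t⁻¹ * V ^ (α/(n:ℝ))) ^ ((m:ℝ)⁻¹) *
            (∏ i, ∫⁻ y in DyadicCube n d.1 d.2, (‖f i y‖₊ : ℝ≥0∞)) ^ ((m:ℝ)⁻¹) :=
          ENNReal.mul_rpow_of_nonneg _ _ hminv
      _ = _ := by rw [← ENNReal.prod_rpow_of_nonneg hminv]
  -- main covering estimate
  have main : volume ({x | t < MFracDyadic m n α f x} ∩ DyadicCube n κ j₀) ≤
      ((t⁻¹ * V ^ (α/(n:ℝ))) * PI) ^ ((m:ℝ)⁻¹) := by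
    calc volume ({x | t < MFracDyadic m n α f x} ∩ DyadicCube n κ j₀)
        ≤ volume (⋃ d ∈ M, DyadicCube n d.1 d.2) := measure_mono cover
      _ ≤ ∑' d : ↥M, volume (DyadicCube n d.1.1 d.1.2) :=
          measure_biUnion_le volume (Set.to_countable M) _
      _ ≤ ∑' d : ↥M, ((t⁻¹ * V ^ (α/(n:ℝ))) ^ ((m:ℝ)⁻¹) *
            ∏ i, (∫⁻ y in DyadicCube n d.1.1 d.1.2, (‖f i y‖₊ : ℝ≥0∞)) ^ ((m:ℝ)⁻¹)) :=
          ENNReal.tsum_le_tsum (fun d => cube_bd d.1 d.prop)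
      _ = (t⁻¹ * V ^ (α/(n:ℝ))) ^ ((m:ℝ)⁻¹) *
            ∑' d : ↥M, ∏ i, (∫⁻ y in DyadicCube n d.1.1 d.1.2, (‖f i y‖₊ : ℝ≥0∞)) ^ ((m:ℝ)⁻¹) :=
          ENNReal.tsum_mul_left
      _ ≤ (t⁻¹ * V ^ (α/(n:ℝ))) ^ ((m:ℝ)⁻¹) *
            ∏ i, (∑' d : ↥M, ∫⁻ y in DyadicCube n d.1.1 d.1.2, (‖f i y‖₊ : ℝ≥0∞)) ^ ((m:ℝ)⁻¹) :=
          mul_le_mul_right (tsum_prod_rpow hm _) _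
      _ ≤ (t⁻¹ * V ^ (α/(n:ℝ))) ^ ((m:ℝ)⁻¹) *
            ∏ i, (∫⁻ y in DyadicCube n κ j₀, (‖f i y‖₊ : ℝ≥0∞)) ^ ((m:ℝ)⁻¹) := by
          apply mul_le_mul_right
          apply Finset.prod_le_prod'
          intro i _
          apply ENNReal.rpow_le_rpow _ hminv
          rw [← lintegral_iUnion (fun d : ↥M => dyadic_measurable d.1.1 d.1.2) hdisj]
          exact lintegral_mono' (Measure.restrict_mono
            (Set.iUnion_subset fun d => d.prop.1.1) le_rfl) le_rfl
      _ = ((t⁻¹ * V ^ (α/(n:ℝ))) * PI) ^ ((m:ℝ)⁻¹) := by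
          rw [ENNReal.prod_rpow_of_nonneg hminv, ← ENNReal.mul_rpow_of_nonneg _ _ hminv, hPIdef]
  -- upper bound on the product of integrals via the parent cube
  have hparent_le : dyadAvg m n α f (DyadicCube n (κ-1) (fun i => j₀ i / 2)) ≤ A ^ k :=
    not_lt.mp (hSmax _ ⟨κ-1, fun i => j₀ i / 2, rfl⟩
      (ssubset_of_subset_of_ne (parent_subset κ j₀) (parent_ne hn κ j₀)))
  have hW : volume (DyadicCube n (κ-1) (fun i => j₀ i / 2)) = 2^n * V := parent_volume κ j₀
  have hWtop : volume (DyadicCube n (κ-1) (fun i => j₀ i / 2)) ≠ ⊤ := dyadic_volume_ne_top _ _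
  have hpow_ne_top : (2:ℝ≥0∞) ^ (-(n:ℝ)) ≠ ⊤ := by
    rw [ENNReal.rpow_neg]
    exact ENNReal.inv_ne_top.mpr (ENNReal.rpow_pos two_pos h2top).ne'
  have hVW : V ^ r = (2:ℝ≥0∞) ^ (-(n:ℝ) * r) *
      (volume (DyadicCube n (κ-1) (fun i => j₀ i / 2))) ^ r := by
    have hV : V = (2:ℝ≥0∞) ^ (-(n:ℝ)) * volume (DyadicCube n (κ-1) (fun i => j₀ i / 2)) := by
      rw [hW, ← mul_assoc]
      have hcancel : (2:ℝ≥0∞) ^ (-(n:ℝ)) * 2 ^ n = 1 := by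
        rw [← ENNReal.rpow_natCast (2:ℝ≥0∞) n, ← ENNReal.rpow_add _ _ h20 h2top,
          neg_add_cancel, ENNReal.rpow_zero]
      rw [hcancel, one_mul]
    rw [hV, ENNReal.mul_rpow_of_ne_top hpow_ne_top hWtop, ← ENNReal.rpow_mul]
  have hcomp0 : dyadAvg m n α f (DyadicCube n κ j₀) ≤
      (2:ℝ≥0∞) ^ ((m:ℝ)*(n:ℝ) - α) * dyadAvg m n α f (DyadicCube n (κ-1) (fun i => j₀ i / 2)) := by
    have hmono : ∀ i : Fin m, (∫⁻ y in DyadicCube n κ j₀, (‖f i y‖₊ : ℝ≥0∞)) ≤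
        ∫⁻ y in DyadicCube n (κ-1) (fun i => j₀ i / 2), (‖f i y‖₊ : ℝ≥0∞) := fun i =>
      lintegral_mono' (Measure.restrict_mono (parent_subset κ j₀) le_rfl) le_rfl
    rw [dyadAvg, dyadAvg, hr_eq]
    calc ∏ i, V ^ r * (∫⁻ y in DyadicCube n κ j₀, (‖f i y‖₊ : ℝ≥0∞))
        ≤ ∏ i, ((2:ℝ≥0∞) ^ (-(n:ℝ) * r) *
            ((volume (DyadicCube n (κ-1) (fun i => j₀ i / 2))) ^ r *
              ∫⁻ y in DyadicCube n (κ-1) (fun i => j₀ i / 2), (‖f i y‖₊ : ℝ≥0∞))) := by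
          apply Finset.prod_le_prod'
          intro i _
          rw [hVW, mul_assoc]
          exact mul_le_mul_right (mul_le_mul_right (hmono i) _) _
      _ = ((2:ℝ≥0∞) ^ (-(n:ℝ) * r)) ^ (m:ℕ) *
            ∏ i, ((volume (DyadicCube n (κ-1) (fun i => j₀ i / 2))) ^ r *
              ∫⁻ y in DyadicCube n (κ-1) (fun i => j₀ i / 2), (‖f i y‖₊ : ℝ≥0∞)) := by
          rw [Finset.prod_mul_distrib, Finset.prod_const, Finset.card_univ, Fintype.card_fin]
      _ = (2:ℝ≥0∞) ^ ((m:ℝ)*(n:ℝ) - α) *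
            ∏ i, ((volume (DyadicCube n (κ-1) (fun i => j₀ i / 2))) ^ r *
              ∫⁻ y in DyadicCube n (κ-1) (fun i => j₀ i / 2), (‖f i y‖₊ : ℝ≥0∞)) := by
          congr 1
          rw [← ENNReal.rpow_natCast ((2:ℝ≥0∞) ^ (-(n:ℝ) * r)) m, ← ENNReal.rpow_mul]
          congr 1
          rw [hrdef]
          field_simp
          ring
  have havgS : dyadAvg m n α f (DyadicCube n κ j₀) = V ^ (r * (m:ℝ)) * PI := by
    rw [dyadAvg, hr_eq, hPIdef]
    exact prod_eq V _
  have hub : V ^ (r * (m:ℝ)) * PI ≤ (2:ℝ≥0∞) ^ ((m:ℝ)*(n:ℝ) - α) * A ^ k :=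
    havgS ▸ (hcomp0.trans (mul_le_mul_right hparent_le _))
  have hPIub : PI ≤ V ^ (-(r * (m:ℝ))) * ((2:ℝ≥0∞) ^ ((m:ℝ)*(n:ℝ) - α) * A ^ k) := by
    have h1 := mul_le_mul_right hub (V ^ (-(r * (m:ℝ))))
    rwa [← mul_assoc, ← ENNReal.rpow_add _ _ hV0 hVtop, neg_add_cancel,
      ENNReal.rpow_zero, one_mul] at h1
  -- final arithmetic
  have hVcomb : V ^ (α/(n:ℝ)) * V ^ (-(r * (m:ℝ))) = V ^ ((m:ℝ)) := by
    rw [← ENNReal.rpow_add _ _ hV0 hVtop]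
    congr 1
    linarith [exps]
  have htA : t⁻¹ * A ^ k = A⁻¹ := by
    rw [htdef, ← ENNReal.zpow_neg, ← ENNReal.zpow_add hA0 hAtop,
      show (-(k+1)+k : ℤ) = -1 by ring, ENNReal.zpow_neg A 1, zpow_one]
  have hconst : A⁻¹ * (2:ℝ≥0∞) ^ ((m:ℝ)*(n:ℝ) - α) = (2:ℝ≥0∞) ^ (-α - (m:ℝ)) := by
    rw [hAdef, ← ENNReal.rpow_natCast (2:ℝ≥0∞) (m*(n+1)), ← ENNReal.rpow_neg,
      ← ENNReal.rpow_add _ _ h20 h2top]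
    congr 1
    push_cast
    ring
  have hstep : (t⁻¹ * V ^ (α/(n:ℝ))) * PI ≤ (2:ℝ≥0∞) ^ (-α - (m:ℝ)) * V ^ ((m:ℝ)) := by
    calc (t⁻¹ * V ^ (α/(n:ℝ))) * PI
        ≤ (t⁻¹ * V ^ (α/(n:ℝ))) *
            (V ^ (-(r * (m:ℝ))) * ((2:ℝ≥0∞) ^ ((m:ℝ)*(n:ℝ) - α) * A ^ k)) :=
          mul_le_mul_right hPIub _
      _ = (t⁻¹ * A ^ k) * ((2:ℝ≥0∞) ^ ((m:ℝ)*(n:ℝ) - α)) *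
            (V ^ (α/(n:ℝ)) * V ^ (-(r * (m:ℝ)))) := by ring
      _ = (2:ℝ≥0∞) ^ (-α - (m:ℝ)) * V ^ ((m:ℝ)) := by rw [htA, hconst, hVcomb]
  have harith : ((t⁻¹ * V ^ (α/(n:ℝ))) * PI) ^ ((m:ℝ)⁻¹) ≤ (1/2 : ℝ≥0∞) * V := by
    calc ((t⁻¹ * V ^ (α/(n:ℝ))) * PI) ^ ((m:ℝ)⁻¹)
        ≤ ((2:ℝ≥0∞) ^ (-α - (m:ℝ)) * V ^ ((m:ℝ))) ^ ((m:ℝ)⁻¹) :=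
          ENNReal.rpow_le_rpow hstep hminv
      _ = ((2:ℝ≥0∞) ^ (-α - (m:ℝ))) ^ ((m:ℝ)⁻¹) * V := by
          rw [ENNReal.mul_rpow_of_nonneg _ _ hminv, ← ENNReal.rpow_mul V,
            mul_inv_cancel₀ hmR.ne', ENNReal.rpow_one]
      _ = (2:ℝ≥0∞) ^ ((-α - (m:ℝ)) * (m:ℝ)⁻¹) * V := by rw [← ENNReal.rpow_mul]
      _ ≤ (2:ℝ≥0∞) ^ (-1 : ℝ) * V := by
          apply mul_le_mul_left
          apply ENNReal.rpow_le_rpow_of_exponent_le one_le_two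
          rw [← div_eq_mul_inv, div_le_iff₀ hmR]
          linarith
      _ = (1/2 : ℝ≥0∞) * V := by
          congr 1
          rw [show (-1 : ℝ) = -(1:ℝ) by norm_num, ENNReal.rpow_neg, ENNReal.rpow_one, one_div]
  exact main.trans harith
end

section
/- Let n = 1, 0 < ε < 1, 1 < p_i < ∞, 1/p = Σ 1/p_i, 0 < α < m, 1/m < p < 1/α, 1/q = 1/p − α. Set ω_i(x) = |x|^{(1−ε)(1−1/p_i)} and f_i(x) = x^{−1+ε} χ_{(0,1)}(x) for i = 1,…,m. Then [ω⃗]_{A_{(P⃗,q)}} ≈ (1/ε)^{q(m − 1/p)}, ∏_{i=1}^m ‖f_i‖_{L^{p_i}(ω_i^{p_i})} = (1/ε)^{1/p} (up to constants independent of ε), and ‖M_α(f⃗)‖_{L^q(ν_ω⃗^q)} ≥ c (1/ε)^{m + 1/q}. Consequently, any exponent γ for which ‖M_α(f⃗)‖_{L^q(ν_ω⃗^q)} ≤ C[ω⃗]_{A_{(P⃗,q)}}^γ ∏‖f_i‖_{L^{p_i}(ω_i^{p_i})} holds for all weights and functions must satisfy γ ≥ (mp/(q(mp−1)))(1 − α/m).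 -/
open MeasureTheory ENNReal NNReal Set

/-- The example weights `ω_i(x) = |x|^{(1-ε)(1-1/p_i)}` on `ℝ`. -/
noncomputable def exW (m : ℕ) (p : Fin m → ℝ) (ε : ℝ) : Fin m → En 1 → ℝ≥0∞ :=
  fun i x => ENNReal.ofReal (|x 0| ^ ((1 - ε) * (1 - 1/(p i))))

/-- The example functions `f_i(x) = x^{-1+ε} χ_{(0,1)}(x)` on `ℝ`. -/
noncomputable def exF (m : ℕ) (ε : ℝ) : Fin m → En 1 → ℝ :=
  fun _ x => if 0 < x 0 ∧ x 0 < 1 then (x 0) ^ (-1 + ε) else 0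

noncomputable section
def e1 : En 1 ≃ᵐ ℝ :=
  (MeasurableEquiv.toLp 2 (Fin 1 → ℝ)).symm.trans (MeasurableEquiv.funUnique (Fin 1) ℝ)
lemma e1_apply (x : En 1) : e1 x = x 0 := rfl
lemma e1_mp : MeasurePreserving e1 volume volume :=
  (EuclideanSpace.volume_preserving_symm_measurableEquiv_toLp (Fin 1)).trans
    (volume_preserving_funUnique (Fin 1) ℝ)

lemma lint_En (g : ℝ → ℝ≥0∞) : ∫⁻ x : En 1, g (x 0) = ∫⁻ t : ℝ, g t :=
  e1_mp.lintegral_comp_emb e1.measurableEmbedding g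

lemma lint_Ioc_rpow {β c : ℝ} (hβ : -1 < β) (hc : 0 ≤ c) :
    ∫⁻ t in Ioc 0 c, ENNReal.ofReal (t ^ β) = ENNReal.ofReal (c ^ (β+1) / (β+1)) := by
  rw [← MeasureTheory.ofReal_integral_eq_lintegral_ofReal]
  · rw [← intervalIntegral.integral_of_le hc, integral_rpow (Or.inl hβ),
      Real.zero_rpow (by linarith)]
    norm_num
  · have : IntervalIntegrable (fun t : ℝ => t ^ β) volume 0 c :=
      intervalIntegral.intervalIntegrable_rpow' hβ
    simpa [intervalIntegrable_iff, uIoc_of_le hc, IntegrableOn] using this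
  · filter_upwards [ae_restrict_mem measurableSet_Ioc] with t ht
    exact Real.rpow_nonneg ht.1.le _

lemma lint_Ioo_rpow {β c : ℝ} (hβ : -1 < β) (hc : 0 ≤ c) :
    ∫⁻ t in Ioo 0 c, ENNReal.ofReal (t ^ β) = ENNReal.ofReal (c ^ (β+1) / (β+1)) := by
  rw [Measure.restrict_congr_set Ioo_ae_eq_Ioc, lint_Ioc_rpow hβ hc]

lemma norm_eq {m : ℕ} (p : Fin m → ℝ) {ε : ℝ} (hε : 0 < ε) (hε1 : ε < 1)
    (i : Fin m) (hpi : 1 < p i) :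
    wnorm 1 (p i) (fun x => exW m p ε i x ^ (p i))
      (fun x => (‖exF m ε i x‖₊ : ℝ≥0∞)) = ENNReal.ofReal (1/ε) ^ (1/(p i)) := by
  have hp0 : (0:ℝ) < p i := by linarith
  have hpt : ∀ x : En 1, (‖exF m ε i x‖₊ : ℝ≥0∞) ^ (p i) * (exW m p ε i x) ^ (p i)
      = Set.indicator (Ioo (0:ℝ) 1) (fun t => ENNReal.ofReal (t ^ (-1+ε))) (x 0) := by
    intro x
    by_cases hx : x 0 ∈ Ioo (0:ℝ) 1
    · obtain ⟨h0, h1⟩ := hx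
      rw [indicator_of_mem (Set.mem_Ioo.mpr ⟨h0, h1⟩)]
      simp only [exF, exW, if_pos (And.intro h0 h1)]
      rw [← enorm_eq_nnnorm, Real.enorm_eq_ofReal (Real.rpow_nonneg h0.le _), abs_of_pos h0,
        ENNReal.ofReal_rpow_of_pos (Real.rpow_pos_of_pos h0 _),
        ENNReal.ofReal_rpow_of_pos (Real.rpow_pos_of_pos h0 _),
        ← Real.rpow_mul h0.le, ← Real.rpow_mul h0.le,
        ← ENNReal.ofReal_mul (Real.rpow_nonneg h0.le _), ← Real.rpow_add h0]
      congr 1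
      have hne : p i ≠ 0 := ne_of_gt hp0
      field_simp
      ring_nf
    · rw [indicator_of_notMem hx]
      have hx' : ¬ (0 < x 0 ∧ x 0 < 1) := by simpa [Set.mem_Ioo] using hx
      simp only [exF, if_neg hx', nnnorm_zero]
      rw [ENNReal.coe_zero, ENNReal.zero_rpow_of_pos hp0, zero_mul]
  unfold wnorm
  have : (∫⁻ x : En 1, (‖exF m ε i x‖₊ : ℝ≥0∞) ^ (p i) * (exW m p ε i x) ^ (p i))
      = ENNReal.ofReal (1/ε) := by
    calc ∫⁻ x : En 1, (‖exF m ε i x‖₊ : ℝ≥0∞) ^ (p i) * (exW m p ε i x) ^ (p i)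
        = ∫⁻ x : En 1,
            Set.indicator (Ioo (0:ℝ) 1) (fun t => ENNReal.ofReal (t ^ (-1+ε))) (x 0) := by
          simp_rw [hpt]
      _ = ∫⁻ t : ℝ, Set.indicator (Ioo (0:ℝ) 1) (fun t => ENNReal.ofReal (t ^ (-1+ε))) t :=
          lint_En _
      _ = ∫⁻ t in Ioo (0:ℝ) 1, ENNReal.ofReal (t ^ (-1+ε)) :=
          lintegral_indicator measurableSet_Ioo _
      _ = ENNReal.ofReal (1/ε) := by
          rw [lint_Ioo_rpow (by linarith) zero_le_one]
          norm_num
  rw [this]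

lemma prod_ofReal_rpow {m : ℕ} {u : ℝ} (hu : 0 < u) (c : Fin m → ℝ) :
    ∏ i, ENNReal.ofReal u ^ (c i) = ENNReal.ofReal u ^ (∑ i, c i) := by
  simp_rw [ENNReal.ofReal_rpow_of_pos hu]
  rw [← ENNReal.ofReal_prod_of_nonneg (fun i _ => Real.rpow_nonneg hu.le _),
    ← Real.rpow_sum_of_pos hu]

lemma norm_prod_ex {m : ℕ} (hm : 0 < m) (p : Fin m → ℝ) (hp : ∀ i, 1 < p i) {pp : ℝ}
    (hpp : 1/pp = ∑ i, 1/p i) {ε : ℝ} (hε : 0 < ε) (hε1 : ε < 1) :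
    ∏ i, wnorm 1 (p i) (fun x => exW m p ε i x ^ (p i))
      (fun x => (‖exF m ε i x‖₊ : ℝ≥0∞)) = ENNReal.ofReal (1/ε) ^ (1/pp) := by
  have h1ε : (0:ℝ) < 1/ε := by positivity
  calc ∏ i, wnorm 1 (p i) (fun x => exW m p ε i x ^ (p i))
        (fun x => (‖exF m ε i x‖₊ : ℝ≥0∞))
      = ∏ i, ENNReal.ofReal (1/ε) ^ (1/(p i)) :=
        Finset.prod_congr rfl (fun i _ => norm_eq p hε hε1 i (hp i))
    _ = ENNReal.ofReal (1/ε) ^ (∑ i, 1/(p i)) := prod_ofReal_rpow h1ε _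
    _ = _ := by rw [← hpp]

lemma lint_Ico_rpow {β c : ℝ} (hβ : -1 < β) (hβ0 : β ≠ 0) (hc : 0 ≤ c) :
    ∫⁻ t in Ico 0 c, ENNReal.ofReal (t ^ β) = ENNReal.ofReal (c ^ (β+1) / (β+1)) := by
  rcases eq_or_lt_of_le hc with rfl | hc'
  · simp [Real.zero_rpow (show β + 1 ≠ 0 by linarith)]
  · have h1 : (Ico (0:ℝ) c) = {0} ∪ Ioo 0 c := by
      ext t; constructor
      · rintro ⟨h1, h2⟩
        rcases eq_or_lt_of_le h1 with rfl | h
        · exact Or.inl rfl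
        · exact Or.inr ⟨h, h2⟩
      · rintro (rfl | ⟨h1, h2⟩)
        · exact ⟨le_refl _, hc'⟩
        · exact ⟨h1.le, h2⟩
    rw [h1, lintegral_union measurableSet_Ioo (by simp)]
    rw [lint_Ioo_rpow hβ hc]
    simp [Real.zero_rpow hβ0]

lemma lint_neg_abs {c : ℝ} (g : ℝ → ℝ≥0∞) :
    ∫⁻ t in Ico (-c) 0, g |t| = ∫⁻ t in Ioc 0 c, g |t| := by
  have hmp : MeasurePreserving (Neg.neg : ℝ → ℝ) volume volume :=
    Measure.measurePreserving_neg volume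
  have hpre : (Neg.neg : ℝ → ℝ) ⁻¹' (Ioc 0 c) = Ico (-c) 0 := by
    ext t
    simp only [mem_preimage, mem_Ioc, mem_Ico]
    constructor
    · rintro ⟨h1, h2⟩; exact ⟨by linarith, by linarith⟩
    · rintro ⟨h1, h2⟩; exact ⟨by linarith, by linarith⟩
  have := hmp.setLIntegral_comp_preimage_emb
    (MeasurableEquiv.neg ℝ).measurableEmbedding (fun t => g |t|) (Ioc 0 c)
  rw [hpre] at this
  simpa [abs_neg] using this

lemma lint_Icc_abs_rpow {β c : ℝ} (hβ : -1 < β) (hc : 0 ≤ c) :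
    ∫⁻ t in Icc (-c) c, ENNReal.ofReal (|t| ^ β) ≤
      ENNReal.ofReal (c ^ (β+1) / (β+1)) + ENNReal.ofReal (c ^ (β+1) / (β+1)) := by
  have key : ∫⁻ t in Ioc 0 c, ENNReal.ofReal (|t| ^ β)
      = ENNReal.ofReal (c ^ (β+1) / (β+1)) := by
    rw [setLIntegral_congr_fun measurableSet_Ioc
      (fun t (ht : t ∈ Ioc 0 c) => by beta_reduce; rw [abs_of_pos ht.1])]
    exact lint_Ioc_rpow hβ hc
  have hsub : Icc (-c) c ⊆ Ico (-c) 0 ∪ Icc 0 c := by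
    intro t ⟨h1, h2⟩
    rcases lt_or_ge t 0 with h | h
    · exact Or.inl ⟨h1, h⟩
    · exact Or.inr ⟨h, h2⟩
  calc ∫⁻ t in Icc (-c) c, ENNReal.ofReal (|t| ^ β)
      ≤ ∫⁻ t in Ico (-c) 0 ∪ Icc 0 c, ENNReal.ofReal (|t| ^ β) :=
        lintegral_mono_set hsub
    _ ≤ (∫⁻ t in Ico (-c) 0, ENNReal.ofReal (|t| ^ β)) +
        ∫⁻ t in Icc 0 c, ENNReal.ofReal (|t| ^ β) := lintegral_union_le _ _ _
    _ ≤ _ := by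
        rw [lint_neg_abs (fun u => ENNReal.ofReal (u ^ β)), key,
          Measure.restrict_congr_set Ioc_ae_eq_Icc.symm, key]


lemma cube_eq (a : Fin 1 → ℝ) (h : ℝ) :
    Cube 1 a h = e1 ⁻¹' (Ico (a 0) (a 0 + h)) := by
  ext x
  simp [Cube, e1_apply, Fin.forall_fin_one, Set.mem_Ico]

lemma lint_cube (a : Fin 1 → ℝ) (h : ℝ) (g : ℝ → ℝ≥0∞) :
    ∫⁻ x in Cube 1 a h, g (x 0) = ∫⁻ t in Ico (a 0) (a 0 + h), g t := by
  rw [cube_eq]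
  exact e1_mp.setLIntegral_comp_preimage_emb e1.measurableEmbedding g _

lemma vol_cube (a : Fin 1 → ℝ) (h : ℝ) :
    volume (Cube 1 a h) = ENNReal.ofReal h := by
  rw [cube_eq, e1_mp.measure_preimage (measurableSet_Ico).nullMeasurableSet,
    Real.volume_Ico]
  congr 1; ring

section params
variable {m : ℕ} {p : Fin m → ℝ} {pp q ε : ℝ}

lemma rconj_pos {r : ℝ} (hr : 1 < r) : 0 < rconj r := by
  unfold rconj; apply div_pos <;> linarith

lemma q_div_rconj {r : ℝ} (hr : 1 < r) (q : ℝ) : q / rconj r = q * (1 - 1/r) := by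
  unfold rconj
  have h1 : r ≠ 0 := by linarith
  have h2 : r - 1 ≠ 0 := by intro h; apply h1; linarith
  field_simp

lemma sum_one_sub_inv (hm : 0 < m) (hpp : 1/pp = ∑ i, 1/p i) :
    ∑ i, (1 - 1/p i) = (m:ℝ) - 1/pp := by
  rw [Finset.sum_sub_distrib, hpp]
  simp [Finset.card_univ]

/-- pointwise formula for `(∏ exW)^q`. -/
lemma prodW_pow (hp : ∀ i, 1 < p i) (hpp : 1/pp = ∑ i, 1/p i) (hm : 0 < m)
    (hε : 0 < ε) (hε1 : ε < 1) (hq : 0 < q) (x : En 1) :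
    (∏ i, exW m p ε i x) ^ q
      = ENNReal.ofReal (|x 0| ^ (q * ((1-ε) * ((m:ℝ) - 1/pp)))) := by
  have habs : (0:ℝ) ≤ |x 0| := abs_nonneg _
  have h1 : ∏ i, exW m p ε i x
      = ENNReal.ofReal (|x 0| ^ ((1-ε) * ((m:ℝ) - 1/pp))) := by
    unfold exW
    rw [← ENNReal.ofReal_prod_of_nonneg (fun i _ => Real.rpow_nonneg habs _),
      ← Real.rpow_sum_of_nonneg habs
        (fun i _ => mul_nonneg (by linarith) (by
          have h := hp i
          have h2 : 1/p i < 1 := (div_lt_one (by linarith)).mpr h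
          linarith))]
    rw [← Finset.mul_sum, sum_one_sub_inv hm hpp]
  rw [h1, ENNReal.ofReal_rpow_of_nonneg (Real.rpow_nonneg habs _) hq.le,
    ← Real.rpow_mul habs]
  ring_nf

/-- pointwise formula for `exW ^ (-(rconj))` away from the origin. -/
lemma wNegPow (hp : ∀ i, 1 < p i) (hε : 0 < ε) (hε1 : ε < 1) (i : Fin m)
    {t : ℝ} (ht : t ≠ 0) :
    ENNReal.ofReal (|t| ^ ((1 - ε) * (1 - 1/(p i)))) ^ (-(rconj (p i)))
      = ENNReal.ofReal (|t| ^ (-(1-ε))) := by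
  have habs : (0:ℝ) < |t| := abs_pos.mpr ht
  rw [ENNReal.ofReal_rpow_of_pos (Real.rpow_pos_of_pos habs _),
    ← Real.rpow_mul habs.le]
  congr 2
  have h1 : p i ≠ 0 := by have := hp i; linarith
  have h2 : p i - 1 ≠ 0 := by have := hp i; intro h; linarith
  unfold rconj
  field_simp

end params

section apq
variable {m : ℕ} {p : Fin m → ℝ} {pp q ε : ℝ}

lemma exW_negpow_int (hp : ∀ i, 1 < p i) (hε : 0 < ε) (hε1 : ε < 1) (i : Fin m)
    (a : Fin 1 → ℝ) (h : ℝ) :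
    ∫⁻ x in Cube 1 a h, exW m p ε i x ^ (-(rconj (p i)))
      = ∫⁻ t in Ico (a 0) (a 0 + h), ENNReal.ofReal (|t| ^ (-(1-ε))) := by
  have h1 : ∫⁻ x in Cube 1 a h, exW m p ε i x ^ (-(rconj (p i)))
      = ∫⁻ t in Ico (a 0) (a 0 + h),
          ENNReal.ofReal (|t| ^ ((1 - ε) * (1 - 1/(p i)))) ^ (-(rconj (p i))) := by
    simp only [exW]
    exact lint_cube a h
      (fun t => ENNReal.ofReal (|t| ^ ((1 - ε) * (1 - 1/(p i)))) ^ (-(rconj (p i))))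
  rw [h1]
  apply lintegral_congr_ae
  have hz : ∀ᵐ t : ℝ, t ≠ 0 := by
    rw [ae_iff]
    have hset : {t : ℝ | ¬ t ≠ 0} = {0} := by ext t; simp
    rw [hset]
    exact measure_singleton 0
  filter_upwards [ae_restrict_of_ae hz] with t ht
  exact wNegPow hp hε hε1 i ht

lemma apq_lower (hm : 0 < m) (hp : ∀ i, 1 < p i) (hpp : 1/pp = ∑ i, 1/p i)
    (hq : 0 < q) (hs : 0 < (m:ℝ) - 1/pp) (hε : 0 < ε) (hε1 : ε < 1) :
    ENNReal.ofReal (1/(q*((m:ℝ)-1/pp)+1)) * ENNReal.ofReal (1/ε) ^ (q*((m:ℝ)-1/pp))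
      ≤ Apq m 1 p q (exW m p ε) := by
  set s' : ℝ := (m:ℝ) - 1/pp with hs'
  set δ : ℝ := q * ((1-ε) * s') with hδ
  have hδpos : 0 < δ := by
    exact _root_.mul_pos hq (_root_.mul_pos (by linarith) hs)
  set a0 : Fin 1 → ℝ := fun _ => (0:ℝ) with ha0
  have ha00 : a0 0 = 0 := rfl
  have hvol : volume (Cube 1 a0 1) = 1 := by rw [vol_cube]; simp
  -- numerator bound
  have hnumeq : ∫⁻ x in Cube 1 a0 1, (∏ i, exW m p ε i x) ^ q
      = ENNReal.ofReal (1/(δ+1)) := by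
    have hpw : ∀ x : En 1, (∏ i, exW m p ε i x) ^ q = ENNReal.ofReal (|x 0| ^ δ) :=
      fun x => prodW_pow hp hpp hm hε hε1 hq x
    calc ∫⁻ x in Cube 1 a0 1, (∏ i, exW m p ε i x) ^ q
        = ∫⁻ x in Cube 1 a0 1, ENNReal.ofReal (|x 0| ^ δ) := by simp_rw [hpw]
      _ = ∫⁻ t in Ico (a0 0) (a0 0 + 1), ENNReal.ofReal (|t| ^ δ) :=
          lint_cube a0 1 (fun t => ENNReal.ofReal (|t| ^ δ))
      _ = ∫⁻ t in Ico (0:ℝ) 1, ENNReal.ofReal (t ^ δ) := by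
          rw [ha00]; norm_num
          exact setLIntegral_congr_fun measurableSet_Ico
            (fun t ht => by beta_reduce; rw [abs_of_nonneg ht.1])
      _ = ENNReal.ofReal (1/(δ+1)) := by
          rw [lint_Ico_rpow (by linarith) (ne_of_gt hδpos) zero_le_one, Real.one_rpow]
  have hnum : ENNReal.ofReal (1/(q*s'+1))
      ≤ (volume (Cube 1 a0 1))⁻¹ * ∫⁻ x in Cube 1 a0 1, (∏ i, exW m p ε i x) ^ q := by
    rw [hvol, inv_one, one_mul, hnumeq]
    apply ENNReal.ofReal_le_ofReal
    apply one_div_le_one_div_of_le (by linarith)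
    have : δ ≤ q * s' := by
      rw [hδ]; apply mul_le_mul_of_nonneg_left _ hq.le; nlinarith
    linarith
  -- factor bounds
  have hfac : ∀ i : Fin m, ENNReal.ofReal (1/ε) ^ (q * (1 - 1/(p i)))
      ≤ ((volume (Cube 1 a0 1))⁻¹ *
          ∫⁻ x in Cube 1 a0 1, exW m p ε i x ^ (-(rconj (p i)))) ^ (q / rconj (p i)) := by
    intro i
    rw [hvol, inv_one, one_mul, q_div_rconj (hp i)]
    apply ENNReal.rpow_le_rpow _ (by
      have h2 : 1/p i < 1 := (div_lt_one (by linarith [hp i])).mpr (hp i)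
      nlinarith)
    rw [exW_negpow_int hp hε hε1 i a0 1, ha00]
    calc ENNReal.ofReal (1/ε)
        = ∫⁻ t in Ioo (0:ℝ) 1, ENNReal.ofReal (t ^ (-1+ε)) := by
          rw [lint_Ioo_rpow (by linarith) zero_le_one]; norm_num
      _ = ∫⁻ t in Ioo (0:ℝ) 1, ENNReal.ofReal (|t| ^ (-(1-ε))) := by
          apply setLIntegral_congr_fun measurableSet_Ioo
          simp only [EqOn]
          intro t ht
          rw [abs_of_pos ht.1]
          ring_nf
      _ ≤ ∫⁻ t in Ico (0:ℝ) (0 + 1), ENNReal.ofReal (|t| ^ (-(1-ε))) := by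
          apply lintegral_mono_set
          rw [zero_add]
          exact Ioo_subset_Ico_self
  -- assemble
  have hbody : ENNReal.ofReal (1/(q*s'+1)) * ENNReal.ofReal (1/ε) ^ (q*s')
      ≤ ((volume (Cube 1 a0 1))⁻¹ * ∫⁻ x in Cube 1 a0 1, (∏ i, exW m p ε i x) ^ q) *
        ∏ i, ((volume (Cube 1 a0 1))⁻¹ *
          ∫⁻ x in Cube 1 a0 1, exW m p ε i x ^ (-(rconj (p i)))) ^ (q / rconj (p i)) := by
    apply mul_le_mul' hnum
    calc ENNReal.ofReal (1/ε) ^ (q*s')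
        = ∏ i, ENNReal.ofReal (1/ε) ^ (q * (1 - 1/(p i))) := by
          rw [prod_ofReal_rpow (by positivity), ← Finset.mul_sum,
            sum_one_sub_inv hm hpp]
      _ ≤ _ := Finset.prod_le_prod' (fun i _ => hfac i)
  refine hbody.trans ?_
  exact le_iSup_of_le a0 (le_iSup_of_le 1 (le_iSup_of_le one_pos le_rfl))

end apq

section apqup
variable {m : ℕ} {p : Fin m → ℝ} {pp q ε : ℝ}

/-- Key uniform average bound for the negative-power weight. -/
lemma fac_int_bound (hε : 0 < ε) (hε1 : ε < 1) {A h b : ℝ} (hh : 0 < h)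
    (hb : b = max |A| |A + h|) :
    ∫⁻ t in Ico A (A + h), ENNReal.ofReal (|t| ^ (-(1-ε)))
      ≤ ENNReal.ofReal h * ENNReal.ofReal (6/ε * b ^ (-(1-ε))) := by
  have hA1 : |A| ≤ b := hb ▸ le_max_left _ _
  have hA2 : |A + h| ≤ b := hb ▸ le_max_right _ _
  have hbpos : 0 < b := by
    have h2 : h ≤ |A| + |A + h| := by
      calc h = |(A + h) - A| := by rw [show A + h - A = h by ring, abs_of_pos hh]
        _ ≤ |A + h| + |A| := abs_sub _ _
        _ = |A| + |A + h| := by ring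
    nlinarith
  have hbe : (0:ℝ) < b ^ (-(1-ε)) := Real.rpow_pos_of_pos hbpos _
  rcases le_or_gt b (3*h) with hcase | hcase
  · -- near the origin
    have hsub : Ico A (A + h) ⊆ Icc (-b) b := by
      intro t ⟨h1, h2⟩
      constructor
      · linarith [neg_abs_le A]
      · linarith [le_abs_self (A + h)]
    have hbd := lint_Icc_abs_rpow (β := -(1-ε)) (c := b) (by linarith) hbpos.le
    have hstep : ∫⁻ t in Ico A (A + h), ENNReal.ofReal (|t| ^ (-(1-ε)))
        ≤ ENNReal.ofReal (b ^ ε / ε) + ENNReal.ofReal (b ^ ε / ε) := by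
      refine (lintegral_mono_set hsub).trans ?_
      convert hbd using 3
      · rfl
      all_goals ring_nf
    refine hstep.trans ?_
    rw [← ENNReal.ofReal_add (by positivity) (by positivity),
      ← ENNReal.ofReal_mul hh.le]
    apply ENNReal.ofReal_le_ofReal
    have hbeq : b ^ (-(1-ε)) = b ^ ε / b := by
      rw [show -(1-ε) = ε - 1 by ring, Real.rpow_sub hbpos, Real.rpow_one]
    rw [hbeq]
    have hbe2 : (0:ℝ) < b ^ ε := Real.rpow_pos_of_pos hbpos _
    calc b ^ ε / ε + b ^ ε / ε = 2 * (b ^ ε / ε) := by ring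
      _ ≤ (6*h/b) * (b ^ ε / ε) := by
          apply mul_le_mul_of_nonneg_right _ (by positivity)
          rw [le_div_iff₀ hbpos]; linarith
      _ = h * (6/ε * (b ^ ε / b)) := by field_simp
  · -- away from the origin
    have hpt : ∀ t ∈ Ico A (A + h), (2/3) * b ≤ |t| := by
      intro t ⟨h1, h2⟩
      have e1 : |A| - h ≤ |t| := by
        have : |A - t| ≤ h := by
          rw [abs_sub_comm, abs_of_nonneg (by linarith)]; linarith
        have := abs_sub_abs_le_abs_sub A t
        linarith
      have e2 : |A + h| - h ≤ |t| := by
        have : |A + h - t| ≤ h := by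
          rw [abs_of_nonneg (by linarith)]; linarith
        have := abs_sub_abs_le_abs_sub (A + h) t
        linarith
      have : b - h ≤ |t| := by
        rcases max_cases |A| |A + h| with ⟨he, _⟩ | ⟨he, _⟩ <;> rw [hb, he]
        · exact e1
        · exact e2
      linarith
    have hub : ∀ t ∈ Ico A (A + h), ENNReal.ofReal (|t| ^ (-(1-ε)))
        ≤ ENNReal.ofReal (((2/3) * b) ^ (-(1-ε))) := by
      intro t ht
      exact ENNReal.ofReal_le_ofReal
        (Real.rpow_le_rpow_of_nonpos (by positivity) (hpt t ht) (by linarith))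
    calc ∫⁻ t in Ico A (A + h), ENNReal.ofReal (|t| ^ (-(1-ε)))
        ≤ ∫⁻ _ in Ico A (A + h), ENNReal.ofReal (((2/3) * b) ^ (-(1-ε))) :=
          setLIntegral_mono (by measurability) hub
      _ = ENNReal.ofReal (((2/3) * b) ^ (-(1-ε))) * ENNReal.ofReal h := by
          rw [setLIntegral_const, Real.volume_Ico]
          congr 1; congr 1; ring
      _ ≤ _ := by
          rw [mul_comm]
          apply mul_le_mul_right
          apply ENNReal.ofReal_le_ofReal
          rw [Real.mul_rpow (by norm_num) hbpos.le]
          have e3 : ((2:ℝ)/3) ^ (-(1-ε)) ≤ (2/3) ^ (-1 : ℝ) :=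
            Real.rpow_le_rpow_of_exponent_ge (by norm_num) (by norm_num) (by linarith)
          have e4 : ((2:ℝ)/3) ^ (-1 : ℝ) = 3/2 := by
            rw [Real.rpow_neg_one]; norm_num
          have e5 : (3:ℝ)/2 ≤ 6/ε := by
            rw [div_le_div_iff₀ (by norm_num) hε]; nlinarith
          nlinarith [hbe]

lemma num_int_bound {δ A h b : ℝ} (hδ : 0 ≤ δ) (hh : 0 < h)
    (hb : b = max |A| |A + h|) :
    ∫⁻ t in Ico A (A + h), ENNReal.ofReal (|t| ^ δ)
      ≤ ENNReal.ofReal h * ENNReal.ofReal (b ^ δ) := by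
  have hA1 : |A| ≤ b := hb ▸ le_max_left _ _
  have hA2 : |A + h| ≤ b := hb ▸ le_max_right _ _
  have hub : ∀ t ∈ Ico A (A + h), ENNReal.ofReal (|t| ^ δ)
      ≤ ENNReal.ofReal (b ^ δ) := by
    intro t ⟨h1, h2⟩
    apply ENNReal.ofReal_le_ofReal
    apply Real.rpow_le_rpow (abs_nonneg _) _ hδ
    rw [abs_le]
    constructor
    · linarith [neg_abs_le A]
    · linarith [le_abs_self (A + h)]
  calc ∫⁻ t in Ico A (A + h), ENNReal.ofReal (|t| ^ δ)
      ≤ ∫⁻ _ in Ico A (A + h), ENNReal.ofReal (b ^ δ) :=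
        setLIntegral_mono (by measurability) hub
    _ = ENNReal.ofReal (b ^ δ) * ENNReal.ofReal h := by
        rw [setLIntegral_const, Real.volume_Ico]
        congr 1; congr 1; ring
    _ = _ := mul_comm _ _

end apqup

section apqup2
variable {m : ℕ} {p : Fin m → ℝ} {pp q ε : ℝ}

lemma apq_upper (hm : 0 < m) (hp : ∀ i, 1 < p i) (hpp : 1/pp = ∑ i, 1/p i)
    (hq : 0 < q) (hs : 0 < (m:ℝ) - 1/pp) (hε : 0 < ε) (hε1 : ε < 1) :
    Apq m 1 p q (exW m p ε)
      ≤ ENNReal.ofReal ((6:ℝ) ^ (q*((m:ℝ)-1/pp)))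
          * ENNReal.ofReal (1/ε) ^ (q*((m:ℝ)-1/pp)) := by
  set s' : ℝ := (m:ℝ) - 1/pp with hs'
  set δ : ℝ := q * ((1-ε) * s') with hδdef
  have hδnn : 0 ≤ δ := by
    apply mul_nonneg hq.le; apply mul_nonneg; linarith; exact hs.le
  apply iSup_le; intro a; apply iSup_le; intro h; apply iSup_le; intro hh
  set A : ℝ := a 0 with hA
  set b : ℝ := max |A| |A + h| with hb
  have hbpos : 0 < b := by
    have h2 : h ≤ |A| + |A + h| := by
      calc h = |(A + h) - A| := by rw [show A + h - A = h by ring, abs_of_pos hh]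
        _ ≤ |A + h| + |A| := abs_sub _ _
        _ = |A| + |A + h| := by ring
    have := le_max_left |A| |A + h|
    have := le_max_right |A| |A + h|
    nlinarith
  have hV : volume (Cube 1 a h) = ENNReal.ofReal h := vol_cube a h
  have hV0 : (ENNReal.ofReal h) ≠ 0 := by
    simp [ENNReal.ofReal_eq_zero]; linarith
  have hVt : (ENNReal.ofReal h) ≠ ⊤ := ENNReal.ofReal_ne_top
  -- numerator
  have hnum : (volume (Cube 1 a h))⁻¹ * ∫⁻ x in Cube 1 a h, (∏ i, exW m p ε i x) ^ q
      ≤ ENNReal.ofReal (b ^ δ) := by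
    rw [hV]
    have heq : ∫⁻ x in Cube 1 a h, (∏ i, exW m p ε i x) ^ q
        = ∫⁻ t in Ico A (A + h), ENNReal.ofReal (|t| ^ δ) := by
      have hpw : ∀ x : En 1, (∏ i, exW m p ε i x) ^ q = ENNReal.ofReal (|x 0| ^ δ) :=
        fun x => prodW_pow hp hpp hm hε hε1 hq x
      simp_rw [hpw]
      exact lint_cube a h (fun t => ENNReal.ofReal (|t| ^ δ))
    rw [heq]
    calc (ENNReal.ofReal h)⁻¹ * ∫⁻ t in Ico A (A + h), ENNReal.ofReal (|t| ^ δ)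
        ≤ (ENNReal.ofReal h)⁻¹ * (ENNReal.ofReal h * ENNReal.ofReal (b ^ δ)) :=
          mul_le_mul_right (num_int_bound hδnn hh hb) _
      _ = ENNReal.ofReal (b ^ δ) := by
          rw [← mul_assoc, ENNReal.inv_mul_cancel hV0 hVt, one_mul]
  -- factors
  have hfac : ∀ i : Fin m,
      ((volume (Cube 1 a h))⁻¹ *
          ∫⁻ x in Cube 1 a h, exW m p ε i x ^ (-(rconj (p i)))) ^ (q / rconj (p i))
        ≤ (ENNReal.ofReal (6/ε * b ^ (-(1-ε)))) ^ (q * (1 - 1/(p i))) := by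
    intro i
    rw [q_div_rconj (hp i)]
    apply ENNReal.rpow_le_rpow _ (by
      have h2 : 1/p i < 1 := (div_lt_one (by linarith [hp i])).mpr (hp i)
      nlinarith)
    rw [hV, exW_negpow_int hp hε hε1 i a h]
    calc (ENNReal.ofReal h)⁻¹ *
          ∫⁻ t in Ico (a 0) (a 0 + h), ENNReal.ofReal (|t| ^ (-(1-ε)))
        ≤ (ENNReal.ofReal h)⁻¹ *
            (ENNReal.ofReal h * ENNReal.ofReal (6/ε * b ^ (-(1-ε)))) :=
          mul_le_mul_right (fac_int_bound hε hε1 hh hb) _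
      _ = ENNReal.ofReal (6/ε * b ^ (-(1-ε))) := by
          rw [← mul_assoc, ENNReal.inv_mul_cancel hV0 hVt, one_mul]
  -- assemble
  have hu : (0:ℝ) < 6/ε * b ^ (-(1-ε)) := by
    have := Real.rpow_pos_of_pos hbpos (-(1-ε)); positivity
  calc ((volume (Cube 1 a h))⁻¹ * ∫⁻ x in Cube 1 a h, (∏ i, exW m p ε i x) ^ q) *
        ∏ i, ((volume (Cube 1 a h))⁻¹ *
          ∫⁻ x in Cube 1 a h, exW m p ε i x ^ (-(rconj (p i)))) ^ (q / rconj (p i))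
      ≤ ENNReal.ofReal (b ^ δ) *
        ∏ i, (ENNReal.ofReal (6/ε * b ^ (-(1-ε)))) ^ (q * (1 - 1/(p i))) :=
        mul_le_mul' hnum (Finset.prod_le_prod' (fun i _ => hfac i))
    _ = ENNReal.ofReal (b ^ δ) *
        ENNReal.ofReal ((6/ε * b ^ (-(1-ε))) ^ (q * s')) := by
        congr 1
        rw [show (fun i : Fin m => (ENNReal.ofReal (6/ε * b ^ (-(1-ε)))) ^ (q * (1 - 1/(p i))))
            = fun i : Fin m => (ENNReal.ofReal (6/ε * b ^ (-(1-ε)))) ^ ((fun j => q * (1 - 1/(p j))) i) from rfl]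
        rw [prod_ofReal_rpow hu, ← Finset.mul_sum, sum_one_sub_inv hm hpp,
          ENNReal.ofReal_rpow_of_pos hu]
    _ = ENNReal.ofReal (b ^ δ * (6/ε * b ^ (-(1-ε))) ^ (q * s')) := by
        rw [ENNReal.ofReal_mul (Real.rpow_nonneg hbpos.le _)]
    _ = ENNReal.ofReal ((6/ε) ^ (q * s')) := by
        congr 1
        rw [Real.mul_rpow (by positivity) (Real.rpow_nonneg hbpos.le _),
          ← Real.rpow_mul hbpos.le, ← mul_assoc, mul_comm (b ^ δ), mul_assoc,
          ← Real.rpow_add hbpos]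
        rw [show δ + -(1-ε) * (q * s') = 0 by rw [hδdef]; ring, Real.rpow_zero, mul_one]
    _ = ENNReal.ofReal ((6:ℝ) ^ (q*s')) * ENNReal.ofReal (1/ε) ^ (q*s') := by
        rw [show (6:ℝ)/ε = 6 * (1/ε) by ring,
          Real.mul_rpow (by norm_num) (by positivity),
          ENNReal.ofReal_mul (Real.rpow_nonneg (by norm_num) _),
          ENNReal.ofReal_rpow_of_pos (by positivity)]

end apqup2


section mfrac
variable {m : ℕ} {p : Fin m → ℝ} {pp q α ε : ℝ}

lemma mfrac_pointwise (hm : 0 < m) (hα : 0 < α) (hαm : α < m)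
    (hε : 0 < ε) (hε1 : ε < 1) (x : En 1) (hx : x 0 ∈ Ioo (0:ℝ) 1) :
    ENNReal.ofReal ((2:ℝ)^(α-(m:ℝ)) * ((x 0)^(α-(m:ℝ)+(m:ℝ)*ε) * (1/ε)^(m:ℝ)))
      ≤ MFrac m 1 α (exF m ε) x := by
  obtain ⟨h0, h1⟩ := hx
  set t0 : ℝ := x 0 with ht0
  have h2t : 0 < 2 * t0 := by linarith
  set a0 : Fin 1 → ℝ := fun _ => (0:ℝ) with ha0
  have hxC : x ∈ Cube 1 a0 (2 * t0) := by
    intro i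
    have : i = 0 := Subsingleton.elim _ _
    subst this
    constructor
    · exact h0.le
    · show x 0 < (0:ℝ) + 2 * t0; rw [← ht0]; linarith
  have hmR : (0:ℝ) < (m:ℝ) := Nat.cast_pos.mpr hm
  -- the integral of each f i over the cube
  have hint : ∀ i : Fin m, ENNReal.ofReal (t0 ^ ε / ε)
      ≤ ∫⁻ y in Cube 1 a0 (2 * t0), (‖exF m ε i y‖₊ : ℝ≥0∞) := by
    intro i
    have heq : ∫⁻ y in Cube 1 a0 (2 * t0), (‖exF m ε i y‖₊ : ℝ≥0∞)
        = ∫⁻ t in Ico (0:ℝ) (0 + 2 * t0),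
            (‖if 0 < t ∧ t < 1 then t ^ (-1 + ε) else 0‖₊ : ℝ≥0∞) := by
      simp only [exF]
      exact lint_cube a0 (2 * t0)
        (fun t => (‖if 0 < t ∧ t < 1 then t ^ (-1 + ε) else 0‖₊ : ℝ≥0∞))
    rw [heq]
    have hsub : Ioo (0:ℝ) t0 ⊆ Ico (0:ℝ) (0 + 2 * t0) := by
      intro t ⟨ha, hb⟩; exact ⟨ha.le, by linarith⟩
    calc ENNReal.ofReal (t0 ^ ε / ε)
        = ∫⁻ t in Ioo (0:ℝ) t0, ENNReal.ofReal (t ^ (-1+ε)) := by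
          rw [lint_Ioo_rpow (by linarith) h0.le]; norm_num
      _ = ∫⁻ t in Ioo (0:ℝ) t0,
            (‖if 0 < t ∧ t < 1 then t ^ (-1 + ε) else 0‖₊ : ℝ≥0∞) := by
          apply setLIntegral_congr_fun measurableSet_Ioo
          simp only [EqOn]
          intro t ⟨hta, htb⟩
          rw [if_pos ⟨hta, by linarith⟩,
            ← enorm_eq_nnnorm, Real.enorm_eq_ofReal (Real.rpow_nonneg hta.le _)]
      _ ≤ _ := lintegral_mono_set hsub
  have hvol : volume (Cube 1 a0 (2 * t0)) = ENNReal.ofReal (2 * t0) := vol_cube _ _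
  -- lower-bound the body of the supremum
  have hbody : ENNReal.ofReal ((2:ℝ)^(α-(m:ℝ)) * (t0^(α-(m:ℝ)+(m:ℝ)*ε) * (1/ε)^(m:ℝ)))
      ≤ ∏ i : Fin m, (volume (Cube 1 a0 (2 * t0))) ^ (α / (m * 1 : ℝ) - 1) *
          ∫⁻ y in Cube 1 a0 (2 * t0), (‖exF m ε i y‖₊ : ℝ≥0∞) := by
    have hfac : ∀ i : Fin m,
        ENNReal.ofReal ((2 * t0) ^ (α/(m:ℝ) - 1) * (t0 ^ ε / ε))
          ≤ (volume (Cube 1 a0 (2 * t0))) ^ (α / (m * 1 : ℝ) - 1) *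
            ∫⁻ y in Cube 1 a0 (2 * t0), (‖exF m ε i y‖₊ : ℝ≥0∞) := by
      intro i
      rw [hvol, ENNReal.ofReal_mul (Real.rpow_nonneg h2t.le _),
        ENNReal.ofReal_rpow_of_pos h2t]
      apply mul_le_mul'
      · rw [show (α / ((m:ℝ) * 1) - 1) = α/(m:ℝ) - 1 by rw [mul_one]]
      · exact hint i
    calc ENNReal.ofReal ((2:ℝ)^(α-(m:ℝ)) * (t0^(α-(m:ℝ)+(m:ℝ)*ε) * (1/ε)^(m:ℝ)))
        = ∏ _i : Fin m, ENNReal.ofReal ((2 * t0) ^ (α/(m:ℝ) - 1) * (t0 ^ ε / ε)) := by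
          rw [Finset.prod_const, Finset.card_univ, Fintype.card_fin,
            ← ENNReal.ofReal_pow (by positivity)]
          congr 1
          rw [← Real.rpow_natCast (((2 * t0) ^ (α/(m:ℝ) - 1) * (t0 ^ ε / ε))) m,
            Real.mul_rpow (Real.rpow_nonneg h2t.le _) (by positivity),
            ← Real.rpow_mul h2t.le, div_sub' (ne_of_gt hmR)]
          rw [show (α - (m:ℝ) * 1)/(m:ℝ) * (m:ℝ) = α - m by field_simp]
          rw [Real.mul_rpow (by norm_num) h0.le, Real.div_rpow (Real.rpow_nonneg h0.le _) hε.le,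
            ← Real.rpow_mul h0.le]
          rw [show α - (m:ℝ) + (m:ℝ)*ε = (α - (m:ℝ)) + ε*(m:ℝ) by ring, Real.rpow_add h0,
            one_div, Real.inv_rpow hε.le]
          ring
    _ ≤ _ := Finset.prod_le_prod' (fun i _ => hfac i)
  refine hbody.trans ?_
  refine le_trans (le_of_eq ?_) (le_iSup_of_le a0 (le_iSup_of_le (2 * t0)
    (le_iSup_of_le h2t (le_iSup_of_le hxC le_rfl))))
  norm_num

end mfrac

section mfraclow
variable {m : ℕ} {p : Fin m → ℝ} {pp q α ε : ℝ}

lemma mfrac_lower (hm : 0 < m) (hp : ∀ i, 1 < p i) (hpp : 1/pp = ∑ i, 1/p i)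
    (hppos : 0 < pp) (hq : 0 < q) (hqq : 1/q = 1/pp - α) (hα : 0 < α) (hαm : α < m)
    (hs : 0 < (m:ℝ) - 1/pp) (hε : 0 < ε) (hε1 : ε < 1) :
    ENNReal.ofReal ((2:ℝ)^(α-(m:ℝ)) * (pp/q)^(1/q)) * ENNReal.ofReal (1/ε) ^ ((m:ℝ) + 1/q)
      ≤ wnorm 1 q (fun x => (∏ i, exW m p ε i x) ^ q) (MFrac m 1 α (exF m ε)) := by
  set s' : ℝ := (m:ℝ) - 1/pp with hs'
  set δ : ℝ := q * ((1-ε) * s') with hδdef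
  set e : ℝ := (α - (m:ℝ) + (m:ℝ)*ε)*q + δ with hedef
  set K : ℝ := (2:ℝ)^((α-(m:ℝ))*q) * (1/ε)^((m:ℝ)*q) with hKdef
  have hKpos : 0 < K := by
    apply _root_.mul_pos (Real.rpow_pos_of_pos two_pos _)
      (Real.rpow_pos_of_pos (by positivity) _)
  have hαeq : α = 1/pp - 1/q := by linarith
  have he1 : e + 1 = q*ε/pp := by
    rw [hedef, hδdef, hs', hαeq]
    field_simp
    ring
  have he : -1 < e := by
    have : (0:ℝ) < q*ε/pp := by positivity
    linarith
  -- pointwise bound on the integrand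
  have hpt : ∀ x : En 1,
      Set.indicator (Ioo (0:ℝ) 1) (fun t => ENNReal.ofReal (K * t ^ e)) (x 0)
        ≤ MFrac m 1 α (exF m ε) x ^ q * (∏ i, exW m p ε i x) ^ q := by
    intro x
    by_cases hx : x 0 ∈ Ioo (0:ℝ) 1
    · rw [indicator_of_mem hx]
      obtain ⟨h0, h1⟩ := hx
      have hM := mfrac_pointwise hm hα hαm hε hε1 x ⟨h0, h1⟩
      have hW : (∏ i, exW m p ε i x) ^ q = ENNReal.ofReal ((x 0) ^ δ) := by
        rw [prodW_pow hp hpp hm hε hε1 hq x, abs_of_pos h0]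
      rw [hW]
      have hMq : ENNReal.ofReal (((2:ℝ)^(α-(m:ℝ)) *
            ((x 0)^(α-(m:ℝ)+(m:ℝ)*ε) * (1/ε)^(m:ℝ)))^q)
          ≤ MFrac m 1 α (exF m ε) x ^ q := by
        rw [← ENNReal.ofReal_rpow_of_pos (by positivity)]
        exact ENNReal.rpow_le_rpow hM hq.le
      refine le_trans (le_of_eq ?_) (mul_le_mul_left hMq _)
      rw [← ENNReal.ofReal_mul (by positivity)]
      congr 1
      rw [Real.mul_rpow (Real.rpow_nonneg two_pos.le _) (by positivity),
        Real.mul_rpow (Real.rpow_nonneg h0.le _) (Real.rpow_nonneg (by positivity) _),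
        ← Real.rpow_mul two_pos.le, ← Real.rpow_mul h0.le,
        ← Real.rpow_mul (by positivity : (0:ℝ) ≤ 1/ε)]
      rw [hKdef, hedef]
      rw [Real.rpow_add h0]
      ring
    · rw [indicator_of_notMem hx]
      exact zero_le
  -- integrate
  have hint : ENNReal.ofReal (K * (pp/(q*ε)))
      ≤ ∫⁻ x : En 1, MFrac m 1 α (exF m ε) x ^ q * (∏ i, exW m p ε i x) ^ q := by
    have h1 : ∫⁻ x : En 1,
        Set.indicator (Ioo (0:ℝ) 1) (fun t => ENNReal.ofReal (K * t ^ e)) (x 0)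
        = ENNReal.ofReal (K * (pp/(q*ε))) := by
      rw [lint_En (fun t => Set.indicator (Ioo (0:ℝ) 1)
          (fun t => ENNReal.ofReal (K * t ^ e)) t),
        lintegral_indicator measurableSet_Ioo]
      have h2 : ∀ t : ℝ, ENNReal.ofReal (K * t ^ e)
          = ENNReal.ofReal K * ENNReal.ofReal (t ^ e) := by
        intro t; rw [ENNReal.ofReal_mul hKpos.le]
      simp_rw [h2]
      rw [lintegral_const_mul' _ _ ENNReal.ofReal_ne_top, lint_Ioo_rpow he zero_le_one,
        Real.one_rpow, ← ENNReal.ofReal_mul hKpos.le]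
      congr 1
      rw [he1]
      field_simp
    rw [← h1]
    exact lintegral_mono hpt
  -- take the q-th root
  unfold wnorm
  calc ENNReal.ofReal ((2:ℝ)^(α-(m:ℝ)) * (pp/q)^(1/q)) *
        ENNReal.ofReal (1/ε) ^ ((m:ℝ) + 1/q)
      = ENNReal.ofReal (K * (pp/(q*ε))) ^ (1/q) := by
        have h3 : ENNReal.ofReal (1/ε) ^ ((m:ℝ)+1/q)
            = ENNReal.ofReal ((1/ε) ^ ((m:ℝ)+1/q)) :=
          ENNReal.ofReal_rpow_of_pos (by positivity)
        rw [h3, ← ENNReal.ofReal_mul (by positivity),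
          ENNReal.ofReal_rpow_of_pos (by positivity)]
        congr 1
        rw [hKdef, show pp/(q*ε) = (pp/q) * (1/ε) by field_simp,
          Real.mul_rpow (by positivity) (by positivity),
          Real.mul_rpow (Real.rpow_nonneg two_pos.le _) (Real.rpow_nonneg (by positivity) _),
          ← Real.rpow_mul two_pos.le, ← Real.rpow_mul (by positivity : (0:ℝ) ≤ 1/ε),
          Real.mul_rpow (by positivity) (by positivity),
          show (α-(m:ℝ))*q*(1/q) = α - (m:ℝ) by field_simp,
          show (m:ℝ)*q*(1/q) = (m:ℝ) by field_simp,
          show ((m:ℝ) + 1/q) = (m:ℝ) + 1/q from rfl]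
        rw [Real.rpow_add (by positivity : (0:ℝ) < 1/ε)]
        ring
    _ ≤ _ := ENNReal.rpow_le_rpow hint (by positivity)

end mfraclow

section final
variable {m : ℕ} {p : Fin m → ℝ} {pp q α : ℝ}

lemma ennreal_rpow_anti {a b : ℝ≥0∞} {g : ℝ} (hg : g ≤ 0) (hab : a ≤ b) :
    b ^ g ≤ a ^ g := by
  have h1 : b ^ g = (b ^ (-g))⁻¹ := by rw [← ENNReal.rpow_neg, neg_neg]
  have h2 : a ^ g = (a ^ (-g))⁻¹ := by rw [← ENNReal.rpow_neg, neg_neg]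
  rw [h1, h2]
  exact ENNReal.inv_le_inv.mpr (ENNReal.rpow_le_rpow hab (by linarith))

set_option maxHeartbeats 1000000

theorem statement_8_aux (hm : 0 < m) (hp : ∀ i, 1 < p i)
    (hpp : 1/pp = ∑ i, 1/p i) (hα : 0 < α) (hαm : α < m)
    (hpm : 1/(m:ℝ) < pp) (hpn : pp < 1/α) (hq : 1/q = 1/pp - α) :
    (∃ c₁ c₂ c₃ c₄ c₅ : ℝ≥0, 0 < c₁ ∧ 0 < c₂ ∧ 0 < c₃ ∧ 0 < c₄ ∧ 0 < c₅ ∧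
      ∀ ε : ℝ, 0 < ε → ε < 1 →
        ((c₁ : ℝ≥0∞) * ENNReal.ofReal (1/ε) ^ (q * ((m:ℝ) - 1/pp)) ≤
            Apq m 1 p q (exW m p ε) ∧
          Apq m 1 p q (exW m p ε) ≤
            (c₂ : ℝ≥0∞) * ENNReal.ofReal (1/ε) ^ (q * ((m:ℝ) - 1/pp))) ∧
        ((c₃ : ℝ≥0∞) * ENNReal.ofReal (1/ε) ^ (1/pp) ≤
            ∏ i, wnorm 1 (p i) (fun x => exW m p ε i x ^ (p i))
              (fun x => (‖exF m ε i x‖₊ : ℝ≥0∞)) ∧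
          ∏ i, wnorm 1 (p i) (fun x => exW m p ε i x ^ (p i))
              (fun x => (‖exF m ε i x‖₊ : ℝ≥0∞)) ≤
            (c₄ : ℝ≥0∞) * ENNReal.ofReal (1/ε) ^ (1/pp)) ∧
        (c₅ : ℝ≥0∞) * ENNReal.ofReal (1/ε) ^ ((m:ℝ) + 1/q) ≤
          wnorm 1 q (fun x => (∏ i, exW m p ε i x) ^ q) (MFrac m 1 α (exF m ε))) ∧
    ∀ (γ : ℝ) (C : ℝ≥0), 0 < C →
      (∀ (ω : Fin m → En 1 → ℝ≥0∞) (f : Fin m → En 1 → ℝ),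
        Apq m 1 p q ω ≠ ⊤ →
        wnorm 1 q (fun x => (∏ i, ω i x) ^ q) (MFrac m 1 α f) ≤
          (C : ℝ≥0∞) * (Apq m 1 p q ω) ^ γ *
            ∏ i, wnorm 1 (p i) (fun x => ω i x ^ (p i))
              (fun x => (‖f i x‖₊ : ℝ≥0∞))) →
      ((m:ℝ) * pp / (q * ((m:ℝ) * pp - 1))) * (1 - α/m) ≤ γ := by
  -- derived parameter facts
  haveI : Nonempty (Fin m) := ⟨⟨0, hm⟩⟩
  have hmR : (0:ℝ) < m := Nat.cast_pos.mpr hm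
  have h1pp : 0 < 1/pp := by
    rw [hpp]
    exact Finset.sum_pos (fun i _ => by
      have := hp i; positivity) Finset.univ_nonempty
  have hppos : 0 < pp := one_div_pos.mp h1pp
  have hα1pp : α < 1/pp := by
    rw [lt_div_iff₀ hppos]
    calc α * pp < α * (1/α) := by
          apply mul_lt_mul_of_pos_left hpn hα
      _ = 1 := by field_simp
  have h1q : 0 < 1/q := by rw [hq]; linarith
  have hqpos : 0 < q := one_div_pos.mp h1q
  have hs : 0 < (m:ℝ) - 1/pp := by
    have := one_div_lt_one_div_of_lt (by positivity : (0:ℝ) < 1/(m:ℝ)) hpm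
    rw [one_div_one_div] at this
    linarith
  set s' : ℝ := (m:ℝ) - 1/pp with hs'def
  set c1r : ℝ := 1/(q*s'+1) with hc1
  set c2r : ℝ := (6:ℝ) ^ (q*s') with hc2
  set c5r : ℝ := (2:ℝ)^(α-(m:ℝ)) * (pp/q)^(1/q) with hc5
  have hc1p : 0 < c1r := by rw [hc1]; positivity
  have hc2p : 0 < c2r := Real.rpow_pos_of_pos (by norm_num) _
  have hc5p : 0 < c5r := by
    rw [hc5]
    exact _root_.mul_pos (Real.rpow_pos_of_pos two_pos _)
      (Real.rpow_pos_of_pos (by positivity) _)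
  constructor
  · refine ⟨c1r.toNNReal, c2r.toNNReal, 1, 1, c5r.toNNReal,
      Real.toNNReal_pos.mpr hc1p, Real.toNNReal_pos.mpr hc2p, one_pos, one_pos,
      Real.toNNReal_pos.mpr hc5p, ?_⟩
    intro ε hε hε1
    have hcoe1 : ((c1r.toNNReal : ℝ≥0) : ℝ≥0∞) = ENNReal.ofReal c1r := rfl
    have hcoe2 : ((c2r.toNNReal : ℝ≥0) : ℝ≥0∞) = ENNReal.ofReal c2r := rfl
    have hcoe5 : ((c5r.toNNReal : ℝ≥0) : ℝ≥0∞) = ENNReal.ofReal c5r := rfl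
    refine ⟨⟨?_, ?_⟩, ⟨?_, ?_⟩, ?_⟩
    · rw [hcoe1]; exact apq_lower hm hp hpp hqpos hs hε hε1
    · rw [hcoe2]; exact apq_upper hm hp hpp hqpos hs hε hε1
    · rw [norm_prod_ex hm p hp hpp hε hε1, ENNReal.coe_one, one_mul]
    · rw [norm_prod_ex hm p hp hpp hε hε1, ENNReal.coe_one, one_mul]
    · rw [hcoe5]
      exact mfrac_lower hm hp hpp hppos hqpos hq hα hαm hs hε hε1
  · intro γ C hC H
    -- uniform bound on Apq^γ
    obtain ⟨D, hD, hDb⟩ : ∃ D : ℝ, 0 < D ∧ ∀ ε : ℝ, 0 < ε → ε < 1 →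
        (Apq m 1 p q (exW m p ε)) ^ γ
          ≤ ENNReal.ofReal D * ENNReal.ofReal (1/ε) ^ ((q*s')*γ) := by
      rcases le_or_gt 0 γ with hγ | hγ
      · refine ⟨c2r ^ γ, Real.rpow_pos_of_pos hc2p _, fun ε hε hε1 => ?_⟩
        calc (Apq m 1 p q (exW m p ε)) ^ γ
            ≤ (ENNReal.ofReal c2r * ENNReal.ofReal (1/ε) ^ (q*s')) ^ γ :=
              ENNReal.rpow_le_rpow (apq_upper hm hp hpp hqpos hs hε hε1) hγ
          _ = ENNReal.ofReal (c2r ^ γ) * ENNReal.ofReal (1/ε) ^ ((q*s')*γ) := by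
              rw [ENNReal.mul_rpow_of_nonneg _ _ hγ,
                ENNReal.ofReal_rpow_of_pos hc2p, ← ENNReal.rpow_mul]
      · refine ⟨c1r ^ γ, Real.rpow_pos_of_pos hc1p _, fun ε hε hε1 => ?_⟩
        have hlow := apq_lower hm hp hpp hqpos hs hε hε1
        have hEpos : (0:ℝ) < 1/ε := by positivity
        have hanti : (Apq m 1 p q (exW m p ε)) ^ γ
            ≤ (ENNReal.ofReal c1r * ENNReal.ofReal (1/ε) ^ (q*s')) ^ γ :=
          ennreal_rpow_anti hγ.le hlow
        refine hanti.trans (le_of_eq ?_)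
        rw [ENNReal.mul_rpow_of_ne_top ENNReal.ofReal_ne_top
            (ENNReal.rpow_ne_top_of_nonneg (by positivity) ENNReal.ofReal_ne_top),
          ENNReal.ofReal_rpow_of_pos hc1p, ← ENNReal.rpow_mul]
    set A : ℝ := (m:ℝ) + 1/q with hA
    set B : ℝ := (q*s')*γ + 1/pp with hB
    have key : ∀ u : ℝ, 1 < u → c5r * u ^ A ≤ (C:ℝ) * D * u ^ B := by
      intro u hu
      have hupos : (0:ℝ) < u := by linarith
      have hε : 0 < 1/u := by positivity
      have hε1 : 1/u < 1 := by rw [div_lt_one hupos]; linarith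
      have hrec : (1:ℝ)/(1/u) = u := one_div_one_div u
      have h1 := mfrac_lower hm hp hpp hppos hqpos hq hα hαm hs hε hε1
      have hfin : Apq m 1 p q (exW m p (1/u)) ≠ ⊤ :=
        ne_top_of_le_ne_top
          (ENNReal.mul_ne_top ENNReal.ofReal_ne_top
            (ENNReal.rpow_ne_top_of_nonneg (by positivity) ENNReal.ofReal_ne_top))
          (apq_upper hm hp hpp hqpos hs hε hε1)
      have h2 := H (exW m p (1/u)) (exF m (1/u)) hfin
      have hnorm := norm_prod_ex hm p hp hpp hε hε1
      have hDu := hDb (1/u) hε hε1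
      rw [hrec] at h1 hnorm hDu
      have hchain : ENNReal.ofReal c5r * ENNReal.ofReal u ^ A
          ≤ (C : ℝ≥0∞) * (ENNReal.ofReal D * ENNReal.ofReal u ^ ((q*s')*γ)) *
              ENNReal.ofReal u ^ (1/pp) := by
        calc ENNReal.ofReal c5r * ENNReal.ofReal u ^ A
            ≤ wnorm 1 q (fun x => (∏ i, exW m p (1/u) i x) ^ q)
                (MFrac m 1 α (exF m (1/u))) := by rw [hA]; exact h1
          _ ≤ (C : ℝ≥0∞) * (Apq m 1 p q (exW m p (1/u))) ^ γ *
                ENNReal.ofReal u ^ (1/pp) := by rw [← hnorm]; exact h2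
          _ ≤ _ := mul_le_mul' (mul_le_mul_right hDu _) le_rfl
      have hEx : ∀ x : ℝ, (ENNReal.ofReal u) ^ x = ENNReal.ofReal (u ^ x) :=
        fun x => ENNReal.ofReal_rpow_of_pos hupos
      rw [hEx, hEx, hEx, show ((C:ℝ≥0∞)) = ENNReal.ofReal (C:ℝ) from
          (ENNReal.ofReal_coe_nnreal).symm,
        ← ENNReal.ofReal_mul hc5p.le, ← ENNReal.ofReal_mul (by positivity),
        ← ENNReal.ofReal_mul (by positivity), ← ENNReal.ofReal_mul (by positivity)]
        at hchain
      have hreal := (ENNReal.ofReal_le_ofReal_iff (by positivity)).mp hchain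
      refine hreal.trans (le_of_eq ?_)
      rw [hB, Real.rpow_add hupos]
      ring
    have hCpos : (0:ℝ) < (C:ℝ) := by exact_mod_cast hC
    have hAB : A ≤ B := by
      by_contra hAB
      push_neg at hAB
      set M : ℝ := (C:ℝ) * D with hM
      have hMpos : 0 < M := _root_.mul_pos hCpos hD
      set R : ℝ := max (M/c5r) 1 with hR
      have hR1 : 1 ≤ R := le_max_right _ _
      have hABpos : 0 < A - B := by linarith
      set u : ℝ := (R+1) ^ (1/(A-B)) with hu
      have hu1 : 1 < u := by
        rw [hu]
        exact (Real.one_lt_rpow_iff_of_pos (by linarith)).mpr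
          (Or.inl ⟨by linarith, by positivity⟩)
      have hupos : (0:ℝ) < u := by linarith
      have hk := key u hu1
      have huAB : u ^ (A-B) = R+1 := by
        rw [hu, ← Real.rpow_mul (by linarith),
          show (1/(A-B))*(A-B) = 1 by field_simp, Real.rpow_one]
      have hsplit : u ^ A = u ^ B * u ^ (A-B) := by
        rw [← Real.rpow_add hupos]; ring_nf
      have hBpos : 0 < u ^ B := Real.rpow_pos_of_pos hupos _
      rw [hsplit, huAB] at hk
      have h6 : c5r * (R+1) ≤ M := by
        have hk' : (c5r * (R+1)) * u ^ B ≤ M * u ^ B := by nlinarith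
        exact le_of_mul_le_mul_right hk' hBpos
      have h8 : M/c5r ≤ R := le_max_left _ _
      have h9 : M ≤ c5r * R := by
        rw [div_le_iff₀ hc5p] at h8; linarith
      nlinarith
    have hmain : (m:ℝ) - α ≤ γ * (q*s') := by
      have hc : (q*s')*γ = γ*(q*s') := mul_comm _ _
      rw [hA, hB] at hAB
      linarith
    have hqs : 0 < q * s' := by positivity
    have hfinal : ((m:ℝ)-α)/(q*s') ≤ γ := by
      rw [div_le_iff₀ hqs]; linarith
    refine le_trans (le_of_eq ?_) hfinal
    rw [hs'def]
    have hmp1 : 1 < pp * (m:ℝ) := (div_lt_iff₀ hmR).mp hpm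
    have hd1 : (m:ℝ)*pp - 1 ≠ 0 := by nlinarith
    have hd2 : (m:ℝ) - 1/pp ≠ 0 := by
      have : 0 < (m:ℝ) - 1/pp := hs
      linarith
    field_simp

end final

end

/-- the one-dimensional example showing the lower bound
`γ ≥ (mp/(q(mp-1)))(1-α/m)` for the `A_{(P⃗,q)}` power of `M_α`. -/
theorem statement_8 (m : ℕ) (hm : 0 < m) (p : Fin m → ℝ) (hp : ∀ i, 1 < p i)
    (pp q α : ℝ) (hpp : 1/pp = ∑ i, 1/p i) (hα : 0 < α) (hαm : α < m)
    (hpm : 1/(m:ℝ) < pp) (hpn : pp < 1/α) (hq : 1/q = 1/pp - α) :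
    (∃ c₁ c₂ c₃ c₄ c₅ : ℝ≥0, 0 < c₁ ∧ 0 < c₂ ∧ 0 < c₃ ∧ 0 < c₄ ∧ 0 < c₅ ∧
      ∀ ε : ℝ, 0 < ε → ε < 1 →
        ((c₁ : ℝ≥0∞) * ENNReal.ofReal (1/ε) ^ (q * ((m:ℝ) - 1/pp)) ≤
            Apq m 1 p q (exW m p ε) ∧
          Apq m 1 p q (exW m p ε) ≤
            (c₂ : ℝ≥0∞) * ENNReal.ofReal (1/ε) ^ (q * ((m:ℝ) - 1/pp))) ∧
        ((c₃ : ℝ≥0∞) * ENNReal.ofReal (1/ε) ^ (1/pp) ≤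
            ∏ i, wnorm 1 (p i) (fun x => exW m p ε i x ^ (p i))
              (fun x => (‖exF m ε i x‖₊ : ℝ≥0∞)) ∧
          ∏ i, wnorm 1 (p i) (fun x => exW m p ε i x ^ (p i))
              (fun x => (‖exF m ε i x‖₊ : ℝ≥0∞)) ≤
            (c₄ : ℝ≥0∞) * ENNReal.ofReal (1/ε) ^ (1/pp)) ∧
        (c₅ : ℝ≥0∞) * ENNReal.ofReal (1/ε) ^ ((m:ℝ) + 1/q) ≤
          wnorm 1 q (fun x => (∏ i, exW m p ε i x) ^ q) (MFrac m 1 α (exF m ε))) ∧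
    ∀ (γ : ℝ) (C : ℝ≥0), 0 < C →
      (∀ (ω : Fin m → En 1 → ℝ≥0∞) (f : Fin m → En 1 → ℝ),
        Apq m 1 p q ω ≠ ⊤ →
        wnorm 1 q (fun x => (∏ i, ω i x) ^ q) (MFrac m 1 α f) ≤
          (C : ℝ≥0∞) * (Apq m 1 p q ω) ^ γ *
            ∏ i, wnorm 1 (p i) (fun x => ω i x ^ (p i))
              (fun x => (‖f i x‖₊ : ℝ≥0∞))) →
      ((m:ℝ) * pp / (q * ((m:ℝ) * pp - 1))) * (1 - α/m) ≤ γ :=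
  statement_8_aux hm hp hpp hα hαm hpm hpn hq
end

section
/- Let Ω ∈ L^s((S^{n−1})^m), s > 1, be homogeneous of degree zero, 0 < α < mn, and 0 < ε < α. Then for every x ∈ ℝⁿ and nonnegative locally integrable f₁,…,f_m, |I_{Ω,α}(f⃗)(x)| ≤ C (M_{Ω,α+ε}(f⃗)(x))^{1/2} (M_{Ω,α−ε}(f⃗)(x))^{1/2}, where C is independent of f⃗ and x. -/
open MeasureTheory ENNReal NNReal Set

section StatementElevenAux

namespace S11

noncomputable section

variable {m n : ℕ}

/-- The integrand of `IOmega`. -/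
def shF (m n : ℕ) (α : ℝ) (Ω : (Fin m → En n) → ℝ) (f : Fin m → En n → ℝ)
    (x : En n) (y : Fin m → En n) : ℝ≥0∞ :=
  ENNReal.ofReal (bigNorm m n y ^ (α - (m * n : ℝ))) * (‖Ω y‖₊ : ℝ≥0∞) *
    ∏ i, (‖f i (x - y i)‖₊ : ℝ≥0∞)

lemma IOmega_eq (α : ℝ) (Ω : (Fin m → En n) → ℝ) (f : Fin m → En n → ℝ) (x : En n) :
    IOmega m n α Ω f x = ∫⁻ y, shF m n α Ω f x y := rfl

/-- The integrand of `MOmega`. -/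
def gI (m n : ℕ) (Ω : (Fin m → En n) → ℝ) (f : Fin m → En n → ℝ)
    (x : En n) (z : Fin m → En n) : ℝ≥0∞ :=
  (‖Ω (fun i => x - z i)‖₊ : ℝ≥0∞) * ∏ i, (‖f i (z i)‖₊ : ℝ≥0∞)

/-- Dyadic shell. -/
def shell (m n : ℕ) (k : ℤ) : Set (Fin m → En n) :=
  {y | (2:ℝ) ^ k ≤ bigNorm m n y ∧ bigNorm m n y < (2:ℝ) ^ (k + 1)}

lemma bigNorm_nonneg (y : Fin m → En n) : 0 ≤ bigNorm m n y := Real.sqrt_nonneg _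

lemma norm_le_bigNorm (y : Fin m → En n) (i : Fin m) : ‖y i‖ ≤ bigNorm m n y := by
  rw [bigNorm, ← Real.sqrt_sq (norm_nonneg (y i))]
  exact Real.sqrt_le_sqrt
    (Finset.single_le_sum (f := fun i => ‖y i‖ ^ 2) (fun j _ => sq_nonneg _) (Finset.mem_univ i))

lemma coord_le_bigNorm (y : Fin m → En n) (i : Fin m) (j : Fin n) :
    |y i j| ≤ bigNorm m n y := by
  refine le_trans ?_ (norm_le_bigNorm y i)
  rw [EuclideanSpace.norm_eq (y i), ← Real.sqrt_sq_eq_abs]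
  refine Real.sqrt_le_sqrt ?_
  calc (y i j) ^ 2 = ‖y i j‖ ^ 2 := by rw [Real.norm_eq_abs, sq_abs]
    _ ≤ ∑ j', ‖y i j'‖ ^ 2 :=
        Finset.single_le_sum (f := fun j' => ‖y i j'‖ ^ 2) (fun _ _ => sq_nonneg _)
          (Finset.mem_univ j)

lemma measurable_bigNorm : Measurable (bigNorm m n) := by
  unfold bigNorm; fun_prop

lemma measurableSet_shell (k : ℤ) : MeasurableSet (shell m n k) :=
  measurable_bigNorm (measurableSet_Ico (a := (2:ℝ) ^ k) (b := (2:ℝ) ^ (k + 1)))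

lemma shell_disj : Pairwise (Function.onFun Disjoint (shell m n)) := by
  intro k l hkl
  wlog hlt : k < l generalizing k l
  · exact (this hkl.symm (by omega)).symm
  rw [Function.onFun, Set.disjoint_left]
  intro y hy hy'
  have h1 : (2:ℝ) ^ (k + 1) ≤ (2:ℝ) ^ l := zpow_le_zpow_right₀ one_le_two (by omega)
  have := hy.2
  have := hy'.1
  linarith

lemma mem_shell_log {y : Fin m → En n} (hb : 0 < bigNorm m n y) :
    y ∈ shell m n (Int.log 2 (bigNorm m n y)) := by
  constructor
  · have h := Int.zpow_log_le_self (b := 2) (by norm_num) hb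
    exact_mod_cast h
  · have h := Int.lt_zpow_succ_log_self (b := 2) (by norm_num) (bigNorm m n y)
    exact_mod_cast h

lemma cube_preim (a : Fin n → ℝ) (h : ℝ) :
    Cube n a h =
      (MeasurableEquiv.toLp 2 (Fin n → ℝ)).symm ⁻¹' (Set.univ.pi fun i => Ico (a i) (a i + h)) := by
  ext y
  simp [Cube, Set.mem_pi, MeasurableEquiv.coe_toLp]

lemma measurableSet_cube (a : Fin n → ℝ) (h : ℝ) : MeasurableSet (Cube n a h) := by
  rw [cube_preim]
  exact (MeasurableEquiv.toLp 2 (Fin n → ℝ)).symm.measurable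
    (MeasurableSet.univ_pi fun i => measurableSet_Ico)

lemma volume_cube (a : Fin n → ℝ) (h : ℝ) :
    volume (Cube n a h) = ENNReal.ofReal h ^ n := by
  rw [cube_preim, (EuclideanSpace.volume_preserving_symm_measurableEquiv_toLp (Fin n)).measure_preimage
    ((MeasurableSet.univ_pi fun i => measurableSet_Ico).nullMeasurableSet)]
  rw [volume_pi_pi]
  simp [Real.volume_Ico]

/-- The reflection `y ↦ (x - yᵢ)ᵢ` as a measurable equivalence. -/
def negAddEquiv (m : ℕ) (x : En n) : (Fin m → En n) ≃ᵐ (Fin m → En n) where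
  toEquiv := ⟨fun y i => x - y i, fun y i => x - y i,
    fun y => by funext i; simp, fun y => by funext i; simp⟩
  measurable_toFun := measurable_pi_lambda _ fun i => (continuous_const.sub (continuous_apply i)).measurable
  measurable_invFun := by
    change Measurable (fun (y : Fin m → En n) (i : Fin m) => x - y i)
    exact measurable_pi_lambda _ fun i => (continuous_const.sub (continuous_apply i)).measurable

@[simp] lemma negAddEquiv_apply (x : En n) (y : Fin m → En n) :
    negAddEquiv m x y = fun i => x - y i := rfl

lemma negAdd_pres (x : En n) : MeasurePreserving (negAddEquiv m x) volume volume :=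
  volume_preserving_pi fun _ => Measure.measurePreserving_sub_left volume x

lemma cov (x : En n) {S : Set (Fin m → En n)} (hS : MeasurableSet S)
    (g : (Fin m → En n) → ℝ≥0∞) :
    ∫⁻ y in (negAddEquiv m x) ⁻¹' S, g (negAddEquiv m x y) = ∫⁻ z in S, g z := by
  have h1 : (volume : Measure (Fin m → En n)).restrict S
      = Measure.map (negAddEquiv m x) (volume.restrict ((negAddEquiv m x) ⁻¹' S)) := by
    rw [← Measure.restrict_map (negAddEquiv m x).measurable hS, (negAdd_pres x).map_eq]
  rw [h1, lintegral_map_equiv]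

lemma le_MOmega (β : ℝ) (Ω : (Fin m → En n) → ℝ) (f : Fin m → En n → ℝ) (x : En n)
    (a : Fin n → ℝ) (h : ℝ) (hh : 0 < h) (hx : x ∈ Cube n a h) :
    (volume (Cube n a h)) ^ (β / (n : ℝ) - m) *
      ∫⁻ y in Set.univ.pi (fun _ : Fin m => Cube n a h), gI m n Ω f x y
      ≤ MOmega m n β Ω f x := by
  rw [MOmega]
  exact le_iSup_of_le a (le_iSup_of_le h (le_iSup_of_le hh (le_iSup_of_le hx le_rfl)))

lemma MOmega_zero {β β' : ℝ} {Ω : (Fin m → En n) → ℝ} {f : Fin m → En n → ℝ} {x : En n}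
    (h : MOmega m n β Ω f x = 0) : MOmega m n β' Ω f x = 0 := by
  refine le_antisymm ?_ zero_le
  rw [MOmega]
  refine iSup_le fun a => iSup_le fun t => iSup_le fun ht => iSup_le fun hx => ?_
  have hterm : (volume (Cube n a t)) ^ (β / (n : ℝ) - m) *
      (∫⁻ y in Set.univ.pi (fun _ : Fin m => Cube n a t), gI m n Ω f x y) = 0 := by
    refine le_antisymm ?_ zero_le
    rw [← h]
    exact le_MOmega β Ω f x a t ht hx
  have hV0 : volume (Cube n a t) ≠ 0 := by
    rw [volume_cube]
    exact pow_ne_zero _ (ENNReal.ofReal_pos.2 ht).ne'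
  have hVT : volume (Cube n a t) ≠ ⊤ := by
    rw [volume_cube]
    exact ENNReal.pow_ne_top ENNReal.ofReal_ne_top
  have hJ : (∫⁻ y in Set.univ.pi (fun _ : Fin m => Cube n a t), gI m n Ω f x y) = 0 := by
    rcases mul_eq_zero.1 hterm with h' | h'
    · exact absurd h' (by simp [ENNReal.rpow_eq_zero_iff, hV0, hVT])
    · exact h'
  simp [gI] at hJ
  simp [hJ]

/-- The key one-shell estimate. -/
lemma shell_bound (hn : 0 < n) (α β : ℝ) (hαmn : α < m * n) (hβ : 0 < β)
    (Ω : (Fin m → En n) → ℝ) (f : Fin m → En n → ℝ) (x : En n) (k : ℤ) :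
    ∫⁻ y in shell m n k, shF m n α Ω f x y ≤
      ENNReal.ofReal ((2:ℝ) ^ (2 * (m * n : ℝ))) *
        ENNReal.ofReal ((2:ℝ) ^ ((k:ℝ) * (α - β))) * MOmega m n β Ω f x := by
  have hn0 : (n:ℝ) ≠ 0 := Nat.cast_ne_zero.2 hn.ne'
  set r : ℝ := (2:ℝ) ^ (k + 1 : ℤ) with hr
  have hr0 : (0:ℝ) < r := zpow_pos (by norm_num) _
  set h : ℝ := (2:ℝ) ^ (k + 2 : ℤ) with hh
  have hh0 : (0:ℝ) < h := zpow_pos (by norm_num) _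
  have hhr : h = 2 * r := by
    rw [hh, hr, show (k + 2 : ℤ) = (k + 1) + 1 by ring, zpow_add_one₀ (two_ne_zero)]
    ring
  set a : Fin n → ℝ := fun j => x j - r with ha
  have hx : x ∈ Cube n a h := by
    refine fun j => ⟨by simp [ha]; linarith, ?_⟩
    simp only [ha]
    linarith
  set c : ℝ≥0∞ := ENNReal.ofReal ((2:ℝ) ^ ((k:ℝ) * (α - (m * n : ℝ)))) with hc
  have hsub : shell m n k ⊆ (negAddEquiv m x) ⁻¹' (Set.univ.pi fun _ : Fin m => Cube n a h) := by
    intro y hy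
    simp only [Set.mem_preimage, negAddEquiv_apply, Set.mem_univ_pi]
    intro i j
    have h1 : |y i j| ≤ bigNorm m n y := coord_le_bigNorm y i j
    have h2 : bigNorm m n y < r := by
      have := hy.2; rw [hr]; exact this
    have h3 := abs_lt.1 (lt_of_le_of_lt h1 h2)
    refine ⟨?_, ?_⟩
    · simp only [ha, PiLp.sub_apply]
      linarith [h3.2]
    · simp only [ha, PiLp.sub_apply]
      linarith [h3.1]
  have key : ∫⁻ z in Set.univ.pi (fun _ : Fin m => Cube n a h), gI m n Ω f x z ≤
      ENNReal.ofReal (h ^ ((m * n : ℝ) - β)) * MOmega m n β Ω f x := by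
    have hpow : (volume (Cube n a h)) ^ (β / (n:ℝ) - m)
        = ENNReal.ofReal (h ^ (β - (m * n : ℝ))) := by
      rw [volume_cube, ← ENNReal.ofReal_pow hh0.le, ENNReal.ofReal_rpow_of_pos (pow_pos hh0 n)]
      congr 1
      rw [← Real.rpow_natCast h n, ← Real.rpow_mul hh0.le]
      congr 1
      field_simp
    calc ∫⁻ z in Set.univ.pi (fun _ : Fin m => Cube n a h), gI m n Ω f x z
        = ENNReal.ofReal (h ^ ((m * n : ℝ) - β)) * (ENNReal.ofReal (h ^ (β - (m * n : ℝ))) *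
            ∫⁻ z in Set.univ.pi (fun _ : Fin m => Cube n a h), gI m n Ω f x z) := by
          rw [← mul_assoc, ← ENNReal.ofReal_mul (Real.rpow_nonneg hh0.le _),
            ← Real.rpow_add hh0, show ((m * n : ℝ) - β) + (β - (m * n : ℝ)) = (0:ℝ) by ring,
            Real.rpow_zero, ENNReal.ofReal_one, one_mul]
      _ ≤ ENNReal.ofReal (h ^ ((m * n : ℝ) - β)) * MOmega m n β Ω f x := by
          refine mul_le_mul_right ?_ _
          rw [← hpow]
          exact le_MOmega β Ω f x a h hh0 hx
  calc ∫⁻ y in shell m n k, shF m n α Ω f x y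
      ≤ ∫⁻ y in shell m n k,
          c * ((‖Ω y‖₊ : ℝ≥0∞) * ∏ i, (‖f i (x - y i)‖₊ : ℝ≥0∞)) := by
        refine setLIntegral_mono' (measurableSet_shell k) fun y hy => ?_
        rw [shF, mul_assoc]
        refine mul_le_mul_left ?_ _
        refine ENNReal.ofReal_le_ofReal ?_
        have h2k : (0:ℝ) < (2:ℝ) ^ (k:ℤ) := zpow_pos (by norm_num) _
        have hmono : bigNorm m n y ^ (α - (m * n : ℝ)) ≤ ((2:ℝ) ^ (k:ℤ)) ^ (α - (m * n : ℝ)) :=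
          Real.rpow_le_rpow_of_nonpos h2k hy.1 (by linarith)
        calc bigNorm m n y ^ (α - (m * n : ℝ)) ≤ ((2:ℝ) ^ (k:ℤ)) ^ (α - (m * n : ℝ)) := hmono
          _ = (2:ℝ) ^ ((k:ℝ) * (α - (m * n : ℝ))) := by
              rw [← Real.rpow_intCast 2 k, ← Real.rpow_mul (by norm_num)]
    _ = c * ∫⁻ y in shell m n k, ((‖Ω y‖₊ : ℝ≥0∞) * ∏ i, (‖f i (x - y i)‖₊ : ℝ≥0∞)) :=
        lintegral_const_mul' _ _ ENNReal.ofReal_ne_top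
    _ ≤ c * ∫⁻ y in (negAddEquiv m x) ⁻¹' (Set.univ.pi fun _ : Fin m => Cube n a h),
          ((‖Ω y‖₊ : ℝ≥0∞) * ∏ i, (‖f i (x - y i)‖₊ : ℝ≥0∞)) :=
        mul_le_mul_right (lintegral_mono_set hsub) _
    _ = c * ∫⁻ z in Set.univ.pi (fun _ : Fin m => Cube n a h), gI m n Ω f x z := by
        congr 1
        rw [← cov x (MeasurableSet.univ_pi fun _ => measurableSet_cube a h) (gI m n Ω f x)]
        refine lintegral_congr fun y => ?_
        simp [gI, _root_.sub_sub_cancel]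
    _ ≤ c * (ENNReal.ofReal (h ^ ((m * n : ℝ) - β)) * MOmega m n β Ω f x) :=
        mul_le_mul_right key _
    _ ≤ ENNReal.ofReal ((2:ℝ) ^ (2 * (m * n : ℝ))) *
          ENNReal.ofReal ((2:ℝ) ^ ((k:ℝ) * (α - β))) * MOmega m n β Ω f x := by
        rw [← mul_assoc]
        refine mul_le_mul_left ?_ _
        rw [hc, ← ENNReal.ofReal_mul (Real.rpow_nonneg (by norm_num) _),
          ← ENNReal.ofReal_mul (Real.rpow_nonneg (by norm_num) _)]
        refine ENNReal.ofReal_le_ofReal ?_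
        have hh2 : h ^ ((m * n : ℝ) - β) = (2:ℝ) ^ ((((k + 2 : ℤ)):ℝ) * ((m * n : ℝ) - β)) := by
          rw [hh, ← Real.rpow_intCast 2 (k + 2), ← Real.rpow_mul (by norm_num)]
        rw [hh2, ← Real.rpow_add (by norm_num : (0:ℝ) < 2), ← Real.rpow_add (by norm_num : (0:ℝ) < 2)]
        refine Real.rpow_le_rpow_of_exponent_le one_le_two ?_
        push_cast
        nlinarith [hβ]

lemma tsum_split (k₀ : ℤ) (a b : ℤ → ℝ≥0∞) :
    ∑' k : ℤ, (if k₀ ≤ k then a k else b k)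
      = (∑' j : ℕ, a (k₀ + (j:ℤ))) + ∑' j : ℕ, b (k₀ - 1 - (j:ℤ)) := by
  have h1 : ∀ k : ℤ, (if k₀ ≤ k then a k else b k)
      = (if k₀ ≤ k then a k else 0) + (if k₀ ≤ k then 0 else b k) := by
    intro k; split <;> simp
  rw [tsum_congr h1, ENNReal.tsum_add]
  congr 1
  · have hinj : Function.Injective (fun j : ℕ => k₀ + (j:ℤ)) := fun j₁ j₂ hj => by
      simpa using hj
    have hsupp : Function.support (fun k : ℤ => if k₀ ≤ k then a k else 0)
        ⊆ Set.range (fun j : ℕ => k₀ + (j:ℤ)) := by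
      intro k hk
      have hk' : k₀ ≤ k := by
        by_contra hcon
        simp [hcon] at hk
      exact ⟨(k - k₀).toNat, by show k₀ + ((k - k₀).toNat : ℤ) = k; omega⟩
    refine ((Function.Injective.tsum_eq hinj hsupp).symm).trans ?_
    exact tsum_congr fun j => if_pos (by omega)
  · have hinj : Function.Injective (fun j : ℕ => k₀ - 1 - (j:ℤ)) := fun j₁ j₂ hj => by
      simpa using hj
    have hsupp : Function.support (fun k : ℤ => if k₀ ≤ k then 0 else b k)
        ⊆ Set.range (fun j : ℕ => k₀ - 1 - (j:ℤ)) := by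
      intro k hk
      have hk' : ¬ k₀ ≤ k := by
        by_contra hcon
        simp [hcon] at hk
      exact ⟨(k₀ - 1 - k).toNat, by show k₀ - 1 - ((k₀ - 1 - k).toNat : ℤ) = k; omega⟩
    refine ((Function.Injective.tsum_eq hinj hsupp).symm).trans ?_
    exact tsum_congr fun j => if_neg (by omega)

lemma main_sum (hn : 0 < n) (α ε : ℝ) (hα' : α < m * n) (hε : 0 < ε) (hεα : ε < α)
    (Ω : (Fin m → En n) → ℝ) (f : Fin m → En n → ℝ) (x : En n) (k₀ : ℤ) :
    IOmega m n α Ω f x ≤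
      ENNReal.ofReal ((2:ℝ) ^ (2 * (m * n : ℝ))) * (1 - ENNReal.ofReal ((2:ℝ) ^ (-ε)))⁻¹ *
        (ENNReal.ofReal ((2:ℝ) ^ ((k₀:ℝ) * (-ε))) * MOmega m n (α + ε) Ω f x +
         ENNReal.ofReal ((2:ℝ) ^ (((k₀:ℝ) - 1) * ε)) * MOmega m n (α - ε) Ω f x) := by
  set D : ℝ≥0∞ := ENNReal.ofReal ((2:ℝ) ^ (2 * (m * n : ℝ))) with hD
  set Mp : ℝ≥0∞ := MOmega m n (α + ε) Ω f x with hMp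
  set Mm : ℝ≥0∞ := MOmega m n (α - ε) Ω f x with hMm
  have hz : ∫⁻ y in (⋃ k : ℤ, shell m n k)ᶜ, shF m n α Ω f x y = 0 := by
    have hpt : ∀ y ∈ (⋃ k : ℤ, shell m n k)ᶜ, shF m n α Ω f x y = 0 := by
      intro y hy
      have hb : bigNorm m n y = 0 := by
        by_contra hbne
        have hbpos : 0 < bigNorm m n y :=
          lt_of_le_of_ne (bigNorm_nonneg y) (Ne.symm hbne)
        exact hy (Set.mem_iUnion.2 ⟨Int.log 2 (bigNorm m n y), mem_shell_log hbpos⟩)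
      have hne : α - (m * n : ℝ) ≠ 0 := sub_ne_zero.2 hα'.ne
      simp [shF, hb, Real.zero_rpow hne]
    refine le_antisymm ?_ zero_le
    calc ∫⁻ y in (⋃ k : ℤ, shell m n k)ᶜ, shF m n α Ω f x y
        ≤ ∫⁻ _ in (⋃ k : ℤ, shell m n k)ᶜ, (0:ℝ≥0∞) :=
          setLIntegral_mono' (MeasurableSet.iUnion fun k => measurableSet_shell k).compl
            fun y hy => (hpt y hy).le
      _ = 0 := by simp
  have hcover : IOmega m n α Ω f x = ∑' k : ℤ, ∫⁻ y in shell m n k, shF m n α Ω f x y := by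
    rw [IOmega_eq,
      ← lintegral_add_compl (shF m n α Ω f x)
        (MeasurableSet.iUnion fun k : ℤ => measurableSet_shell k),
      hz, add_zero, lintegral_iUnion (fun k => measurableSet_shell k) shell_disj]
  have hbound : ∀ k : ℤ, (∫⁻ y in shell m n k, shF m n α Ω f x y) ≤
      (if k₀ ≤ k then D * ENNReal.ofReal ((2:ℝ) ^ ((k:ℝ) * (-ε))) * Mp
       else D * ENNReal.ofReal ((2:ℝ) ^ ((k:ℝ) * ε)) * Mm) := by
    intro k
    split
    · have hb := shell_bound hn α (α + ε) hα' (by linarith) Ω f x k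
      rwa [show α - (α + ε) = -ε by ring] at hb
    · have hb := shell_bound hn α (α - ε) hα' (by linarith) Ω f x k
      rwa [show α - (α - ε) = ε by ring] at hb
  have hgeo1 : (∑' j : ℕ, (fun k : ℤ => D * ENNReal.ofReal ((2:ℝ) ^ ((k:ℝ) * (-ε))) * Mp)
        (k₀ + (j:ℤ)))
      = D * (1 - ENNReal.ofReal ((2:ℝ) ^ (-ε)))⁻¹ *
          (ENNReal.ofReal ((2:ℝ) ^ ((k₀:ℝ) * (-ε))) * Mp) := by
    have hterm : ∀ j : ℕ, D * ENNReal.ofReal ((2:ℝ) ^ (((k₀ + (j:ℤ) : ℤ):ℝ) * (-ε))) * Mp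
        = (D * ENNReal.ofReal ((2:ℝ) ^ ((k₀:ℝ) * (-ε))) * Mp) *
            (ENNReal.ofReal ((2:ℝ) ^ (-ε))) ^ j := by
      intro j
      have h1 : (2:ℝ) ^ (((k₀ + (j:ℤ) : ℤ):ℝ) * (-ε))
          = (2:ℝ) ^ ((k₀:ℝ) * (-ε)) * ((2:ℝ) ^ (-ε)) ^ j := by
        rw [← Real.rpow_natCast ((2:ℝ) ^ (-ε)) j, ← Real.rpow_mul (by norm_num),
          ← Real.rpow_add (by norm_num : (0:ℝ) < 2)]
        congr 1
        push_cast
        ring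
      rw [h1, ENNReal.ofReal_mul (Real.rpow_nonneg (by norm_num) _),
        ENNReal.ofReal_pow (Real.rpow_nonneg (by norm_num) _)]
      ring
    rw [tsum_congr hterm, ENNReal.tsum_mul_left, ENNReal.tsum_geometric]
    ring
  have hgeo2 : (∑' j : ℕ, (fun k : ℤ => D * ENNReal.ofReal ((2:ℝ) ^ ((k:ℝ) * ε)) * Mm)
        (k₀ - 1 - (j:ℤ)))
      = D * (1 - ENNReal.ofReal ((2:ℝ) ^ (-ε)))⁻¹ *
          (ENNReal.ofReal ((2:ℝ) ^ (((k₀:ℝ) - 1) * ε)) * Mm) := by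
    have hterm : ∀ j : ℕ, D * ENNReal.ofReal ((2:ℝ) ^ (((k₀ - 1 - (j:ℤ) : ℤ):ℝ) * ε)) * Mm
        = (D * ENNReal.ofReal ((2:ℝ) ^ (((k₀:ℝ) - 1) * ε)) * Mm) *
            (ENNReal.ofReal ((2:ℝ) ^ (-ε))) ^ j := by
      intro j
      have h1 : (2:ℝ) ^ (((k₀ - 1 - (j:ℤ) : ℤ):ℝ) * ε)
          = (2:ℝ) ^ (((k₀:ℝ) - 1) * ε) * ((2:ℝ) ^ (-ε)) ^ j := by
        rw [← Real.rpow_natCast ((2:ℝ) ^ (-ε)) j, ← Real.rpow_mul (by norm_num),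
          ← Real.rpow_add (by norm_num : (0:ℝ) < 2)]
        congr 1
        push_cast
        ring
      rw [h1, ENNReal.ofReal_mul (Real.rpow_nonneg (by norm_num) _),
        ENNReal.ofReal_pow (Real.rpow_nonneg (by norm_num) _)]
      ring
    rw [tsum_congr hterm, ENNReal.tsum_mul_left, ENNReal.tsum_geometric]
    ring
  calc IOmega m n α Ω f x
      = ∑' k : ℤ, ∫⁻ y in shell m n k, shF m n α Ω f x y := hcover
    _ ≤ ∑' k : ℤ, (if k₀ ≤ k then D * ENNReal.ofReal ((2:ℝ) ^ ((k:ℝ) * (-ε))) * Mp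
          else D * ENNReal.ofReal ((2:ℝ) ^ ((k:ℝ) * ε)) * Mm) := ENNReal.tsum_le_tsum hbound
    _ = _ := by
        rw [tsum_split k₀ (fun k => D * ENNReal.ofReal ((2:ℝ) ^ ((k:ℝ) * (-ε))) * Mp)
          (fun k => D * ENNReal.ofReal ((2:ℝ) ^ ((k:ℝ) * ε)) * Mm), hgeo1, hgeo2, mul_add]

lemma real_key (A B t : ℝ) (hA : 0 < A) (hB : 0 < B) (ht : 0 < t) (h : t ^ 2 ≤ B / A) :
    t * A ≤ (A * B) ^ ((1:ℝ)/2) := by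
  have hs0 : (0:ℝ) ≤ (A * B) ^ ((1:ℝ)/2) := Real.rpow_nonneg (by positivity) _
  have hs : ((A * B) ^ ((1:ℝ)/2)) ^ 2 = A * B := by
    rw [← Real.rpow_natCast ((A * B) ^ ((1:ℝ)/2)) 2, ← Real.rpow_mul (by positivity)]
    norm_num
  have h1 : t ^ 2 * A ^ 2 ≤ A * B := by
    have h2 : B / A * A ^ 2 = A * B := by field_simp
    nlinarith [mul_le_mul_of_nonneg_right h (sq_nonneg A)]
  nlinarith [sq_nonneg (t * A - (A * B) ^ ((1:ℝ)/2)), sq_nonneg (t * A + (A * B) ^ ((1:ℝ)/2))]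

end

end S11

end StatementElevenAux
open S11 in
/-- pointwise estimate
`|I_{Ω,α}(f⃗)(x)| ≤ C (M_{Ω,α+ε}(f⃗)(x))^{1/2} (M_{Ω,α-ε}(f⃗)(x))^{1/2}`. -/
theorem statement_11 (m n : ℕ) (hm : 0 < m) (hn : 0 < n) (s : ℝ) (hs : 1 < s)
    (Ω : (Fin m → En n) → ℝ) (hΩm : Measurable Ω)
    (hΩhom : ∀ c : ℝ, 0 < c → ∀ y, Ω (fun i => c • y i) = Ω y)
    (α ε : ℝ) (hα : 0 < α) (hα' : α < m * n) (hε : 0 < ε) (hεα : ε < α) :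
    ∃ C : ℝ≥0, 0 < C ∧ ∀ (f : Fin m → En n → ℝ),
      (∀ i x, 0 ≤ f i x) → (∀ i, MeasureTheory.LocallyIntegrable (f i) volume) →
      ∀ x : En n,
        IOmega m n α Ω f x ≤
          (C : ℝ≥0∞) * (MOmega m n (α + ε) Ω f x) ^ ((1:ℝ)/2) *
            (MOmega m n (α - ε) Ω f x) ^ ((1:ℝ)/2) := by
  classical
  set D : ℝ≥0∞ := ENNReal.ofReal ((2:ℝ) ^ (2 * (m * n : ℝ))) with hD
  set Geo : ℝ≥0∞ := (1 - ENNReal.ofReal ((2:ℝ) ^ (-ε)))⁻¹ with hGeo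
  have hrlt : ENNReal.ofReal ((2:ℝ) ^ (-ε)) < 1 :=
    ENNReal.ofReal_lt_one.2 (Real.rpow_lt_one_of_one_lt_of_neg one_lt_two (by linarith))
  have hGeoT : Geo ≠ ⊤ := by
    rw [hGeo, ENNReal.inv_ne_top]
    exact (tsub_pos_of_lt hrlt).ne'
  have hGeo0 : Geo ≠ 0 := by
    rw [hGeo]
    refine ENNReal.inv_ne_zero.2 ?_
    exact (lt_of_le_of_lt tsub_le_self (by norm_num : (1:ℝ≥0∞) < ⊤)).ne
  have hD0 : D ≠ 0 := (ENNReal.ofReal_pos.2 (Real.rpow_pos_of_pos two_pos _)).ne'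
  have hDT : D ≠ ⊤ := ENNReal.ofReal_ne_top
  set Ct : ℝ≥0∞ := 2 * D * Geo with hCt
  have hCt0 : Ct ≠ 0 := by
    rw [hCt]
    exact mul_ne_zero (mul_ne_zero (by norm_num) hD0) hGeo0
  have hCtT : Ct ≠ ⊤ := by
    rw [hCt]
    exact ENNReal.mul_ne_top (ENNReal.mul_ne_top (by norm_num) hDT) hGeoT
  refine ⟨Ct.toNNReal, ENNReal.toNNReal_pos hCt0 hCtT, ?_⟩
  intro f hf hfl x
  have hcoe : (Ct.toNNReal : ℝ≥0∞) = Ct := ENNReal.coe_toNNReal hCtT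
  set Mp : ℝ≥0∞ := MOmega m n (α + ε) Ω f x with hMp
  set Mm : ℝ≥0∞ := MOmega m n (α - ε) Ω f x with hMm
  rw [hcoe, mul_assoc]
  rcases eq_or_ne Mp 0 with hMp0 | hMp0
  · have h1 : MOmega m n (α + ε) Ω f x = 0 := hMp.symm.trans hMp0
    have h2 : MOmega m n (α - ε) Ω f x = 0 := MOmega_zero h1
    have hms := main_sum hn α ε hα' hε hεα Ω f x 0
    rw [h1, h2] at hms
    exact le_trans hms (by simp)
  rcases eq_or_ne Mm 0 with hMm0 | hMm0
  · have h1 : MOmega m n (α - ε) Ω f x = 0 := hMm.symm.trans hMm0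
    have h2 : MOmega m n (α + ε) Ω f x = 0 := MOmega_zero h1
    exact absurd (hMp.trans h2) hMp0
  rcases eq_or_ne Mp ⊤ with hMpT | hMpT
  · have h1 : Mp ^ ((1:ℝ)/2) = (⊤ : ℝ≥0∞) := by
      rw [hMpT]; exact ENNReal.top_rpow_of_pos (by norm_num)
    have h2 : Mm ^ ((1:ℝ)/2) ≠ 0 := by
      simp only [ne_eq, ENNReal.rpow_eq_zero_iff, not_or, not_and]
      constructor
      · intro hcon; exact absurd hcon hMm0
      · intro _; norm_num
    rw [h1, ENNReal.top_mul h2, ENNReal.mul_top hCt0]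
    exact le_top
  rcases eq_or_ne Mm ⊤ with hMmT | hMmT
  · have h1 : Mm ^ ((1:ℝ)/2) = (⊤ : ℝ≥0∞) := by
      rw [hMmT]; exact ENNReal.top_rpow_of_pos (by norm_num)
    have h2 : Mp ^ ((1:ℝ)/2) ≠ 0 := by
      simp only [ne_eq, ENNReal.rpow_eq_zero_iff, not_or, not_and]
      constructor
      · intro hcon; exact absurd hcon hMp0
      · intro _; norm_num
    rw [h1, ENNReal.mul_top h2, ENNReal.mul_top hCt0]
    exact le_top
  -- main case: 0 < Mp, Mm < ∞
  set A : ℝ := Mp.toReal with hA'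
  set B : ℝ := Mm.toReal with hB'
  have hApos : 0 < A := ENNReal.toReal_pos hMp0 hMpT
  have hBpos : 0 < B := ENNReal.toReal_pos hMm0 hMmT
  set L : ℝ := Real.logb 2 (A / B) with hL
  set k₀ : ℤ := ⌈L / (2 * ε)⌉ with hk₀
  have h2L : (2:ℝ) ^ L = A / B := Real.rpow_logb two_pos (by norm_num) (div_pos hApos hBpos)
  have hce1 : L / (2 * ε) ≤ (k₀:ℝ) := Int.le_ceil _
  have hce2 : (k₀:ℝ) < L / (2 * ε) + 1 := Int.ceil_lt_add_one _
  have h2ε : (0:ℝ) < 2 * ε := by linarith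
  have hLle : L ≤ 2 * (k₀:ℝ) * ε := by
    have h := mul_le_mul_of_nonneg_right hce1 h2ε.le
    rw [div_mul_cancel₀ _ h2ε.ne'] at h
    linarith
  have hLge : 2 * ((k₀:ℝ) - 1) * ε ≤ L := by
    have h' : ((k₀:ℝ) - 1) < L / (2 * ε) := by linarith
    have h := mul_lt_mul_of_pos_right h' h2ε
    rw [div_mul_cancel₀ _ h2ε.ne'] at h
    nlinarith
  have hA : ENNReal.ofReal ((2:ℝ) ^ ((k₀:ℝ) * (-ε))) * Mp ≤ (Mp * Mm) ^ ((1:ℝ)/2) := by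
    have hreal : (2:ℝ) ^ ((k₀:ℝ) * (-ε)) * A ≤ (A * B) ^ ((1:ℝ)/2) := by
      refine real_key A B _ hApos hBpos (Real.rpow_pos_of_pos two_pos _) ?_
      have ht2 : ((2:ℝ) ^ ((k₀:ℝ) * (-ε))) ^ 2 = (2:ℝ) ^ ((k₀:ℝ) * (-ε) * 2) := by
        rw [← Real.rpow_natCast ((2:ℝ) ^ ((k₀:ℝ) * (-ε))) 2, ← Real.rpow_mul (by norm_num)]
        norm_num
      have hBA : (2:ℝ) ^ (-L) = B / A := by
        rw [Real.rpow_neg (by norm_num), h2L, inv_div]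
      rw [ht2, ← hBA]
      refine Real.rpow_le_rpow_of_exponent_le one_le_two ?_
      nlinarith
    calc ENNReal.ofReal ((2:ℝ) ^ ((k₀:ℝ) * (-ε))) * Mp
        = ENNReal.ofReal ((2:ℝ) ^ ((k₀:ℝ) * (-ε)) * A) := by
          rw [ENNReal.ofReal_mul (Real.rpow_nonneg (by norm_num) _), hA',
            ENNReal.ofReal_toReal hMpT]
      _ ≤ ENNReal.ofReal ((A * B) ^ ((1:ℝ)/2)) := ENNReal.ofReal_le_ofReal hreal
      _ = (Mp * Mm) ^ ((1:ℝ)/2) := by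
          rw [← ENNReal.ofReal_rpow_of_pos (by positivity), ENNReal.ofReal_mul hApos.le,
            hA', hB', ENNReal.ofReal_toReal hMpT, ENNReal.ofReal_toReal hMmT]
  have hB : ENNReal.ofReal ((2:ℝ) ^ (((k₀:ℝ) - 1) * ε)) * Mm ≤ (Mp * Mm) ^ ((1:ℝ)/2) := by
    have hreal : (2:ℝ) ^ (((k₀:ℝ) - 1) * ε) * B ≤ (B * A) ^ ((1:ℝ)/2) := by
      refine real_key B A _ hBpos hApos (Real.rpow_pos_of_pos two_pos _) ?_
      have ht2 : ((2:ℝ) ^ (((k₀:ℝ) - 1) * ε)) ^ 2 = (2:ℝ) ^ (((k₀:ℝ) - 1) * ε * 2) := by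
        rw [← Real.rpow_natCast ((2:ℝ) ^ (((k₀:ℝ) - 1) * ε)) 2, ← Real.rpow_mul (by norm_num)]
        norm_num
      have hAB : (2:ℝ) ^ L = A / B := h2L
      rw [ht2, ← hAB]
      refine Real.rpow_le_rpow_of_exponent_le one_le_two ?_
      nlinarith
    calc ENNReal.ofReal ((2:ℝ) ^ (((k₀:ℝ) - 1) * ε)) * Mm
        = ENNReal.ofReal ((2:ℝ) ^ (((k₀:ℝ) - 1) * ε) * B) := by
          rw [ENNReal.ofReal_mul (Real.rpow_nonneg (by norm_num) _), hB',
            ENNReal.ofReal_toReal hMmT]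
      _ ≤ ENNReal.ofReal ((B * A) ^ ((1:ℝ)/2)) := ENNReal.ofReal_le_ofReal hreal
      _ = (Mp * Mm) ^ ((1:ℝ)/2) := by
          rw [← ENNReal.ofReal_rpow_of_pos (by positivity), ENNReal.ofReal_mul hBpos.le,
            hA', hB', ENNReal.ofReal_toReal hMpT, ENNReal.ofReal_toReal hMmT, mul_comm]
  have hms := main_sum hn α ε hα' hε hεα Ω f x k₀
  rw [← hD, ← hGeo, ← hMp, ← hMm] at hms
  refine le_trans hms ?_
  calc D * Geo * (ENNReal.ofReal ((2:ℝ) ^ ((k₀:ℝ) * (-ε))) * Mp +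
        ENNReal.ofReal ((2:ℝ) ^ (((k₀:ℝ) - 1) * ε)) * Mm)
      ≤ D * Geo * ((Mp * Mm) ^ ((1:ℝ)/2) + (Mp * Mm) ^ ((1:ℝ)/2)) :=
        mul_le_mul_right (add_le_add hA hB) _
    _ = Ct * (Mp ^ ((1:ℝ)/2) * Mm ^ ((1:ℝ)/2)) := by
        rw [← ENNReal.mul_rpow_of_nonneg Mp Mm (by norm_num : (0:ℝ) ≤ 1/2), hCt]
        ring
end
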